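/- arXiv:1307.1728 — 6 statements merged into one kernel-verified Lean document; each statement's English description precedes it below -/
import Mathlib

section
/- For every natural number n, the ordinary generating function identity ∑_{m ≥ 0} S(n+m, n) x^m = ∏_{y=1}^{n} 1/(1 − x·y) holds as an identity of formal power series over ℚ; equivalently, the formal power series (∏_{y=1}^{n} (1 − y·X)) · (∑_{m ≥ 0} S(n+m, n) X^m) equals 1 in ℚ⟦X⟧. -/
open Finset

namespace StirAux
variable {α : Type*} [DecidableEq α] {s : Finset α} {a : α}

lemma not_mem_part {Q : Finpartition s} (ha : a ∉ s) {t : Finset α} (ht : t ∈ Q.parts) : a ∉ t :=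
  fun h => ha (Q.le ht h)

/-- Add `a` to the part `t` of `Q`. -/
def addToPart (ha : a ∉ s) (Q : Finpartition s) (t : Finset α) (ht : t ∈ Q.parts) :
    Finpartition (insert a s) where
  parts := insert (insert a t) (Q.parts.erase t)
  supIndep := by
    rw [Finset.supIndep_iff_pairwiseDisjoint, coe_insert]
    refine Set.PairwiseDisjoint.insert ?_ ?_
    · exact Q.disjoint.subset (by simp [Finset.erase_subset])
    · intro u hu hne
      simp only [coe_erase, Set.mem_diff, mem_coe, Set.mem_singleton_iff] at hu
      have h1 : Disjoint t u := Q.disjoint hu.1 ht hu.2 |>.symm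
      simp only [id]
      rw [Finset.disjoint_insert_left]
      exact ⟨not_mem_part ha hu.1, h1⟩
  sup_parts := by
    have h1 : t ⊔ (Q.parts.erase t).sup id = s := by
      conv_rhs => rw [← Q.sup_parts, ← Finset.insert_erase ht, Finset.sup_insert, id_eq]
    rw [Finset.sup_insert, id_eq, Finset.sup_eq_union, Finset.insert_union,
      ← Finset.sup_eq_union, h1]
  bot_notMem := by
    simp only [bot_eq_empty, mem_insert, not_or]
    exact ⟨(insert_nonempty a t).ne_empty.symm, fun h => Q.bot_notMem (mem_of_mem_erase h)⟩

lemma parts_addToPart (ha : a ∉ s) (Q : Finpartition s) (t : Finset α) (ht : t ∈ Q.parts) :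
    (addToPart ha Q t ht).parts = insert (insert a t) (Q.parts.erase t) := rfl

lemma insertat_not_mem (ha : a ∉ s) (Q : Finpartition s) (t : Finset α) :
    insert a t ∉ Q.parts := fun h => (not_mem_part ha h) (mem_insert_self a t)

lemma card_addToPart (ha : a ∉ s) (Q : Finpartition s) (t : Finset α) (ht : t ∈ Q.parts) :
    (addToPart ha Q t ht).parts.card = Q.parts.card := by
  rw [parts_addToPart, card_insert_of_notMem (fun h => insertat_not_mem ha Q t (mem_of_mem_erase h)),
    card_erase_of_mem ht]
  have := card_pos.2 ⟨t, ht⟩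
  omega

/-- Add `{a}` as a new singleton part. -/
def addSingleton (ha : a ∉ s) (Q : Finpartition s) : Finpartition (insert a s) :=
  Q.extend (b := {a}) (singleton_ne_empty a) (disjoint_singleton_right.2 ha)
    (by ext x; simp [or_comm])

lemma parts_addSingleton (ha : a ∉ s) (Q : Finpartition s) :
    (addSingleton ha Q).parts = insert {a} Q.parts := rfl

lemma card_addSingleton (ha : a ∉ s) (Q : Finpartition s) :
    (addSingleton ha Q).parts.card = Q.parts.card + 1 := by
  rw [parts_addSingleton, card_insert_of_notMem (fun h => (not_mem_part ha h) (mem_singleton_self a))]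

end StirAux

namespace StirAux
variable {α : Type*} [DecidableEq α] {s : Finset α} {a : α}

/-- Remove the element `a` from a partition of `insert a s`. -/
def eraseElem (ha : a ∉ s) (P : Finpartition (insert a s)) : Finpartition s :=
  (P.avoid {a}).copy (by rw [sdiff_singleton_eq_erase, erase_insert ha])

lemma mem_eraseElem (ha : a ∉ s) (P : Finpartition (insert a s)) {u : Finset α} :
    u ∈ (eraseElem ha P).parts ↔ ∃ d ∈ P.parts, ¬ d ⊆ {a} ∧ d \ {a} = u := by
  rw [eraseElem]
  exact P.mem_avoid

lemma aux1 {Q : Finpartition s} (ha : a ∉ s) {u : Finset α} (hu : u ∈ Q.parts) :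
    ¬ u ⊆ {a} ∧ u \ {a} = u := by
  have hau : a ∉ u := not_mem_part ha hu
  constructor
  · intro h
    rcases subset_singleton_iff.1 h with h | h
    · subst h; exact Q.bot_notMem hu
    · exact hau (h ▸ mem_singleton_self a)
  · rw [sdiff_singleton_eq_erase, erase_eq_of_notMem hau]

lemma part_addSingleton (ha : a ∉ s) (Q : Finpartition s) :
    (addSingleton ha Q).part a = {a} :=
  Finpartition.part_eq_of_mem _ (by rw [parts_addSingleton]; exact mem_insert_self _ _)
    (mem_singleton_self a)

lemma part_addToPart (ha : a ∉ s) (Q : Finpartition s) (t : Finset α) (ht : t ∈ Q.parts) :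
    (addToPart ha Q t ht).part a = insert a t :=
  Finpartition.part_eq_of_mem _ (by rw [parts_addToPart]; exact mem_insert_self _ _)
    (mem_insert_self a t)

lemma eraseElem_addSingleton (ha : a ∉ s) (Q : Finpartition s) :
    eraseElem ha (addSingleton ha Q) = Q := by
  refine Finpartition.ext ?_
  ext u
  rw [mem_eraseElem, parts_addSingleton]
  constructor
  · rintro ⟨d, hd, hd2, rfl⟩
    rcases mem_insert.1 hd with rfl | hd
    · exact absurd Subset.rfl hd2
    · rwa [(aux1 ha hd).2]
  · intro hu
    exact ⟨u, mem_insert_of_mem hu, (aux1 ha hu).1, (aux1 ha hu).2⟩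

lemma eraseElem_addToPart (ha : a ∉ s) (Q : Finpartition s) (t : Finset α) (ht : t ∈ Q.parts) :
    eraseElem ha (addToPart ha Q t ht) = Q := by
  have hat : a ∉ t := not_mem_part ha ht
  have key : ¬ insert a t ⊆ {a} := by
    intro h
    rcases subset_singleton_iff.1 h with h | h
    · exact (insert_nonempty a t).ne_empty h
    · have : t ⊆ {a} := (subset_insert a t).trans (h ▸ Subset.rfl)
      exact (aux1 ha ht).1 this
  have key2 : (insert a t) \ {a} = t := by
    rw [sdiff_singleton_eq_erase, erase_insert hat]
  refine Finpartition.ext ?_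
  ext u
  rw [mem_eraseElem, parts_addToPart]
  constructor
  · rintro ⟨d, hd, hd2, rfl⟩
    rcases mem_insert.1 hd with rfl | hd
    · rw [key2]; exact ht
    · rw [(aux1 ha (mem_of_mem_erase hd)).2]; exact mem_of_mem_erase hd
  · intro hu
    by_cases h : u = t
    · subst h
      exact ⟨insert a u, mem_insert_self _ _, key, key2⟩
    · exact ⟨u, mem_insert_of_mem (mem_erase.2 ⟨h, hu⟩), (aux1 ha hu).1, (aux1 ha hu).2⟩

end StirAux

namespace StirAux
variable {α : Type*} [DecidableEq α] {s : Finset α} {a : α}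

lemma part_a_mem (ha : a ∉ s) (P : Finpartition (insert a s)) : P.part a ∈ P.parts :=
  P.part_mem.2 (mem_insert_self a s)

lemma a_mem_part (ha : a ∉ s) (P : Finpartition (insert a s)) : a ∈ P.part a :=
  P.mem_part (mem_insert_self a s)

lemma notmem_imp_ne (ha : a ∉ s) (P : Finpartition (insert a s)) {d : Finset α}
    (hd : d ∈ P.parts) (had : a ∉ d) : ¬ d ⊆ {a} ∧ d \ {a} = d := by
  constructor
  · intro h
    rcases subset_singleton_iff.1 h with h | h
    · subst h; exact P.bot_notMem hd
    · subst h; exact had (mem_singleton_self a)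
  · rw [sdiff_singleton_eq_erase, erase_eq_of_notMem had]

lemma eq_part_of_a_mem (ha : a ∉ s) (P : Finpartition (insert a s)) {d : Finset α}
    (hd : d ∈ P.parts) (had : a ∈ d) : d = P.part a :=
  (Finpartition.part_eq_of_mem P hd had).symm

/-- Case: `a` is a singleton part. -/
lemma parts_eraseElem_singleton (ha : a ∉ s) (P : Finpartition (insert a s))
    (h : P.part a = {a}) : (eraseElem ha P).parts = P.parts.erase {a} := by
  ext u
  rw [mem_eraseElem, mem_erase]
  constructor
  · rintro ⟨d, hd, hd2, rfl⟩
    have had : a ∉ d := fun ha' => hd2 (by rw [eq_part_of_a_mem ha P hd ha', h])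
    rw [(notmem_imp_ne ha P hd had).2]
    refine ⟨fun h' => had (h' ▸ mem_singleton_self a), hd⟩
  · rintro ⟨hne, hu⟩
    have had : a ∉ u := fun ha' => hne (by rw [eq_part_of_a_mem ha P hu ha', h])
    exact ⟨u, hu, (notmem_imp_ne ha P hu had).1, (notmem_imp_ne ha P hu had).2⟩

/-- Case: `a` is not a singleton part. -/
lemma parts_eraseElem (ha : a ∉ s) (P : Finpartition (insert a s))
    (h : P.part a ≠ {a}) :
    (eraseElem ha P).parts = insert ((P.part a).erase a) (P.parts.erase (P.part a)) := by
  have hsub : ¬ P.part a ⊆ {a} := by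
    intro h'
    rcases subset_singleton_iff.1 h' with h' | h'
    · exact (P.nonempty_of_mem_parts (part_a_mem ha P)).ne_empty h'
    · exact h h'
  ext u
  rw [mem_eraseElem, mem_insert, mem_erase]
  constructor
  · rintro ⟨d, hd, hd2, rfl⟩
    by_cases had : a ∈ d
    · left; rw [eq_part_of_a_mem ha P hd had, sdiff_singleton_eq_erase]
    · right
      rw [(notmem_imp_ne ha P hd had).2]
      exact ⟨fun h' => had (h' ▸ a_mem_part ha P), hd⟩
  · rintro (rfl | ⟨hne, hu⟩)
    · exact ⟨P.part a, part_a_mem ha P, hsub, by rw [sdiff_singleton_eq_erase]⟩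
    · have had : a ∉ u := fun ha' => hne (eq_part_of_a_mem ha P hu ha')
      exact ⟨u, hu, (notmem_imp_ne ha P hu had).1, (notmem_imp_ne ha P hu had).2⟩

lemma erase_part_nonempty (ha : a ∉ s) (P : Finpartition (insert a s))
    (h : P.part a ≠ {a}) : ((P.part a).erase a).Nonempty := by
  rcases (P.nonempty_of_mem_parts (part_a_mem ha P)) with ⟨b, hb⟩
  by_contra h'
  rw [not_nonempty_iff_eq_empty] at h'
  apply h
  ext x
  simp only [mem_singleton]
  constructor
  · intro hx
    by_contra hne
    have : x ∈ (P.part a).erase a := mem_erase.2 ⟨hne, hx⟩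
    simp [h'] at this
  · rintro rfl; exact a_mem_part ha P

lemma erase_part_not_mem (ha : a ∉ s) (P : Finpartition (insert a s))
    (h : P.part a ≠ {a}) : (P.part a).erase a ∉ P.parts := by
  intro hmem
  rcases erase_part_nonempty ha P h with ⟨b, hb⟩
  have h1 : (P.part a).erase a = P.part a :=
    P.eq_of_mem_parts hmem (part_a_mem ha P) hb (mem_of_mem_erase hb)
  have h2 := a_mem_part ha P
  rw [← h1] at h2
  exact (notMem_erase a _) h2

lemma erase_part_mem_eraseElem (ha : a ∉ s) (P : Finpartition (insert a s))
    (h : P.part a ≠ {a}) : (P.part a).erase a ∈ (eraseElem ha P).parts := by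
  rw [parts_eraseElem ha P h]; exact mem_insert_self _ _

/-- Round trip: singleton case. -/
lemma addSingleton_eraseElem (ha : a ∉ s) (P : Finpartition (insert a s))
    (h : P.part a = {a}) : addSingleton ha (eraseElem ha P) = P := by
  refine Finpartition.ext ?_
  rw [parts_addSingleton, parts_eraseElem_singleton ha P h,
    insert_erase (h ▸ part_a_mem ha P)]

/-- Round trip: non-singleton case. -/
lemma addToPart_eraseElem (ha : a ∉ s) (P : Finpartition (insert a s))
    (h : P.part a ≠ {a}) :
    addToPart ha (eraseElem ha P) ((P.part a).erase a) (erase_part_mem_eraseElem ha P h) = P := by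
  refine Finpartition.ext ?_
  rw [parts_addToPart, insert_erase (a_mem_part ha P), parts_eraseElem ha P h,
    erase_insert (fun h' => erase_part_not_mem ha P h (mem_of_mem_erase h')),
    insert_erase (part_a_mem ha P)]

end StirAux

namespace StirAux
variable {α : Type*} [DecidableEq α] {s : Finset α} {a : α}

lemma card_eraseElem_singleton (ha : a ∉ s) (P : Finpartition (insert a s))
    (h : P.part a = {a}) : (eraseElem ha P).parts.card = P.parts.card - 1 := by
  rw [parts_eraseElem_singleton ha P h, card_erase_of_mem (h ▸ part_a_mem ha P)]

lemma card_eraseElem (ha : a ∉ s) (P : Finpartition (insert a s))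
    (h : P.part a ≠ {a}) : (eraseElem ha P).parts.card = P.parts.card := by
  rw [parts_eraseElem ha P h,
    card_insert_of_notMem (fun h' => erase_part_not_mem ha P h (mem_of_mem_erase h')),
    card_erase_of_mem (part_a_mem ha P)]
  have := card_pos.2 ⟨_, part_a_mem ha P⟩
  omega

lemma sigma_eq {k : ℕ} {x y : Σ Q : {Q : Finpartition s // Q.parts.card = k + 1},
    {t // t ∈ Q.1.parts}} (h1 : x.1.1 = y.1.1) (h2 : x.2.1 = y.2.1) : x = y := by
  rcases x with ⟨⟨Q, hQ⟩, ⟨t, ht⟩⟩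
  rcases y with ⟨⟨Q', hQ'⟩, ⟨t', ht'⟩⟩
  dsimp at h1 h2
  subst h1; subst h2
  rfl

/-- The key equivalence. -/
noncomputable def partInsertEquiv (ha : a ∉ s) (k : ℕ) :
    {P : Finpartition (insert a s) // P.parts.card = k + 1} ≃
      (Σ Q : {Q : Finpartition s // Q.parts.card = k + 1}, {t // t ∈ Q.1.parts}) ⊕
        {Q : Finpartition s // Q.parts.card = k} where
  toFun P :=
    if h : P.1.part a = {a} then
      Sum.inr ⟨eraseElem ha P.1, by rw [card_eraseElem_singleton ha P.1 h, P.2]; omega⟩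
    else
      Sum.inl ⟨⟨eraseElem ha P.1, by rw [card_eraseElem ha P.1 h, P.2]⟩,
        ⟨(P.1.part a).erase a, erase_part_mem_eraseElem ha P.1 h⟩⟩
  invFun x :=
    match x with
    | Sum.inl ⟨⟨Q, hQ⟩, ⟨t, ht⟩⟩ => ⟨addToPart ha Q t ht, by rw [card_addToPart]; exact hQ⟩
    | Sum.inr ⟨Q, hQ⟩ => ⟨addSingleton ha Q, by rw [card_addSingleton, hQ]⟩
  left_inv := by
    rintro ⟨P, hP⟩
    by_cases h : P.part a = {a}
    · dsimp only
      rw [dif_pos h]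
      exact Subtype.ext (addSingleton_eraseElem ha P h)
    · dsimp only
      rw [dif_neg h]
      exact Subtype.ext (addToPart_eraseElem ha P h)
  right_inv := by
    rintro (⟨⟨Q, hQ⟩, ⟨t, ht⟩⟩ | ⟨Q, hQ⟩)
    · have hat : a ∉ t := not_mem_part ha ht
      have hne : (addToPart ha Q t ht).part a ≠ {a} := by
        rw [part_addToPart]
        intro h'
        have : t ⊆ {a} := (subset_insert a t).trans (h' ▸ Subset.rfl)
        exact (aux1 ha ht).1 this
      dsimp only
      rw [dif_neg hne]
      refine congrArg Sum.inl (sigma_eq ?_ ?_)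
      · exact eraseElem_addToPart ha Q t ht
      · dsimp only
        rw [part_addToPart, erase_insert hat]
    · have he : (addSingleton ha Q).part a = {a} := part_addSingleton ha Q
      dsimp only
      rw [dif_pos he]
      exact congrArg Sum.inr (Subtype.ext (eraseElem_addSingleton ha Q))

lemma card_subtype_parts {k : ℕ} (Q : {Q : Finpartition s // Q.parts.card = k + 1}) :
    Nat.card {t // t ∈ Q.1.parts} = k + 1 := by
  rw [Nat.card_eq_finsetCard, Q.2]

/-- The recurrence, on the level of finsets. -/
lemma card_insert_rec (ha : a ∉ s) (k : ℕ) :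
    Nat.card {P : Finpartition (insert a s) // P.parts.card = k + 1}
      = (k + 1) * Nat.card {Q : Finpartition s // Q.parts.card = k + 1}
        + Nat.card {Q : Finpartition s // Q.parts.card = k} := by
  classical
  rw [Nat.card_congr (partInsertEquiv ha k), Nat.card_sum]
  congr 1
  have : ∀ Q : {Q : Finpartition s // Q.parts.card = k + 1},
      Nat.card {t // t ∈ Q.1.parts} = k + 1 := card_subtype_parts
  have inst1 : Fintype {Q : Finpartition s // Q.parts.card = k + 1} := Fintype.ofFinite _
  have inst2 : ∀ Q : {Q : Finpartition s // Q.parts.card = k + 1},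
      Fintype {t // t ∈ Q.1.parts} := fun Q => Fintype.ofFinite _
  rw [Nat.card_eq_fintype_card, Fintype.card_sigma]
  calc ∑ Q : {Q : Finpartition s // Q.parts.card = k + 1}, Fintype.card {t // t ∈ Q.1.parts}
      = ∑ Q : {Q : Finpartition s // Q.parts.card = k + 1}, (k + 1) := by
        refine Finset.sum_congr rfl fun Q _ => ?_
        rw [← Nat.card_eq_fintype_card, card_subtype_parts]
    _ = (k + 1) * Nat.card {Q : Finpartition s // Q.parts.card = k + 1} := by
        rw [Finset.sum_const, Nat.card_eq_fintype_card, ← Finset.card_univ, smul_eq_mul, mul_comm]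

end StirAux

namespace StirAux
variable {α : Type*} [DecidableEq α] {s : Finset α} {a : α}

lemma card_insert_zero (ha : a ∉ s) :
    Nat.card {P : Finpartition (insert a s) // P.parts.card = 0} = 0 := by
  have : IsEmpty {P : Finpartition (insert a s) // P.parts.card = 0} := by
    refine ⟨fun P => ?_⟩
    have h1 : P.1.parts.Nonempty := P.1.parts_nonempty (by
      rw [Finset.bot_eq_empty]
      exact (insert_nonempty a s).ne_empty)
    rw [← Finset.card_pos, P.2] at h1
    omega
  exact Nat.card_of_isEmpty

lemma card_empty_partition (k : ℕ) :
    Nat.card {P : Finpartition (∅ : Finset α) // P.parts.card = k}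
      = if k = 0 then 1 else 0 := by
  have hparts : ∀ P : Finpartition (∅ : Finset α), P.parts = ∅ := by
    intro P
    rw [Finpartition.parts_eq_empty_iff]
    rfl
  cases k with
  | zero =>
    rw [if_pos rfl]
    have : Unique {P : Finpartition (∅ : Finset α) // P.parts.card = 0} := by
      refine ⟨⟨⟨(Finpartition.empty (Finset α)).copy rfl, by rw [hparts]; rfl⟩⟩, ?_⟩
      rintro ⟨P, hP⟩
      exact Subtype.ext (Finpartition.ext (by rw [hparts, hparts]))
    exact Nat.card_unique
  | succ k =>
    rw [if_neg (Nat.succ_ne_zero k)]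
    have : IsEmpty {P : Finpartition (∅ : Finset α) // P.parts.card = k + 1} := by
      refine ⟨fun P => ?_⟩
      have := P.2
      rw [hparts] at this
      simp at this
    exact Nat.card_of_isEmpty

end StirAux

/-- Recursively defined Stirling numbers of the second kind. -/
def stR : ℕ → ℕ → ℕ
  | 0, 0 => 1
  | 0, _ + 1 => 0
  | _ + 1, 0 => 0
  | n + 1, k + 1 => (k + 1) * stR n (k + 1) + stR n k

@[simp] lemma stR_zero_zero : stR 0 0 = 1 := rfl
@[simp] lemma stR_zero_succ (k : ℕ) : stR 0 (k + 1) = 0 := rfl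
@[simp] lemma stR_succ_zero (n : ℕ) : stR (n + 1) 0 = 0 := rfl
lemma stR_succ_succ (n k : ℕ) : stR (n + 1) (k + 1) = (k + 1) * stR n (k + 1) + stR n k := rfl

lemma stR_eq_zero_of_lt : ∀ {n k : ℕ}, n < k → stR n k = 0 := by
  intro n
  induction n with
  | zero =>
    rintro (_ | k) h
    · omega
    · rfl
  | succ n ih =>
    rintro (_ | k) h
    · omega
    · rw [stR_succ_succ, ih (by omega), ih (by omega)]
      simp

lemma count_eq_stR {α : Type*} [DecidableEq α] (s : Finset α) (k : ℕ) :
    Nat.card {P : Finpartition s // P.parts.card = k} = stR s.card k := by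
  induction s using Finset.induction_on generalizing k with
  | empty =>
    rw [StirAux.card_empty_partition, Finset.card_empty]
    cases k <;> simp
  | insert a s ha ih =>
    rw [Finset.card_insert_of_notMem ha]
    cases k with
    | zero => rw [StirAux.card_insert_zero ha, stR_succ_zero]
    | succ k => rw [StirAux.card_insert_rec ha, stR_succ_succ, ih, ih]

/-- Stirling number of the second kind: the number of partitions of an
`n`-element set into `k` nonempty blocks. -/
noncomputable def stirling2 (n k : ℕ) : ℕ :=
  Nat.card {P : Finpartition (Finset.univ : Finset (Fin n)) // P.parts.card = k}

lemma stirling2_eq_stR (n k : ℕ) : stirling2 n k = stR n k := by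
  rw [stirling2, count_eq_stR, Finset.card_univ, Fintype.card_fin]

open PowerSeries in
lemma step_mul (n : ℕ) :
    (1 - ((n + 1 : ℕ) : ℚ⟦X⟧) * PowerSeries.X) *
        PowerSeries.mk (fun m => (stR (n + 1 + m) (n + 1) : ℚ))
      = PowerSeries.mk (fun m => (stR (n + m) n : ℚ)) := by
  ext m
  rw [sub_mul, one_mul, map_sub,
    show ((n + 1 : ℕ) : ℚ⟦X⟧) = PowerSeries.C ((n + 1 : ℕ) : ℚ) from (map_natCast _ _).symm,
    mul_assoc, PowerSeries.coeff_C_mul]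
  cases m with
  | zero =>
    rw [PowerSeries.coeff_zero_eq_constantCoeff, map_mul]
    simp only [PowerSeries.constantCoeff_X, mul_zero, sub_zero, PowerSeries.coeff_mk,
      ← PowerSeries.coeff_zero_eq_constantCoeff, PowerSeries.coeff_mk]
    norm_num
    rw [stR_succ_succ, stR_eq_zero_of_lt (by omega)]
    simp
  | succ m =>
    rw [PowerSeries.coeff_succ_X_mul]
    simp only [PowerSeries.coeff_mk]
    have h1 : n + 1 + (m + 1) = (n + m + 1) + 1 := by omega
    have h2 : n + 1 + m = n + m + 1 := by omega
    rw [h1, h2, stR_succ_succ]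
    push_cast
    ring_nf

open PowerSeries in
lemma ogf_stR (n : ℕ) :
    (∏ y ∈ Finset.Icc 1 n, (1 - (y : ℚ⟦X⟧) * PowerSeries.X)) *
      PowerSeries.mk (fun m => (stR (n + m) n : ℚ)) = 1 := by
  induction n with
  | zero =>
    rw [Finset.Icc_eq_empty (by omega), Finset.prod_empty, one_mul]
    ext m
    cases m with
    | zero => simp
    | succ m => simp [PowerSeries.coeff_mk, PowerSeries.coeff_one]
  | succ n ih =>
    rw [Finset.prod_Icc_succ_top (by omega), mul_assoc, step_mul n, ih]

open PowerSeries in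
/-- `∑_{m ≥ 0} S(n+m, n) x^m = ∏_{y=1}^{n} 1/(1 − x·y)` as formal power series
over `ℚ`, stated as `(∏_{y=1}^{n} (1 - y·X)) · (∑_{m≥0} S(n+m,n) X^m) = 1`. -/
theorem stirling2_ogf (n : ℕ) :
    (∏ y ∈ Finset.Icc 1 n, (1 - (y : ℚ⟦X⟧) * PowerSeries.X)) *
      PowerSeries.mk (fun m => (stirling2 (n + m) n : ℚ)) = 1 := by
  have : (PowerSeries.mk (fun m => (stirling2 (n + m) n : ℚ)))
      = PowerSeries.mk (fun m => (stR (n + m) n : ℚ)) := by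
    exact congrArg PowerSeries.mk (funext fun m => by rw [stirling2_eq_stR])
  rw [this]
  exact ogf_stR n
end

section
/- For every natural number n, the exponential generating function identity (e^X − 1)^n = n! · ∑_{m ≥ 0} (S(m, n)/m!) X^m holds as an identity of formal power series over ℚ, where e^X denotes the formal exponential power series. -/
open Nat

open Finset Function

/-- Number of surjections from `Fin m` onto `Fin n`. -/
noncomputable def surjCount (m n : ℕ) : ℕ :=
  Nat.card {f : Fin m → Fin n // Function.Surjective f}

theorem surjCount_zero_zero : surjCount 0 0 = 1 := by
  rw [surjCount, Nat.card_eq_one_iff_unique]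
  constructor
  · exact ⟨fun f g => Subtype.ext (funext fun x => x.elim0)⟩
  · exact ⟨⟨fun x => x.elim0, fun y => y.elim0⟩⟩

theorem surjCount_succ_zero (m : ℕ) : surjCount (m + 1) 0 = 0 := by
  rw [surjCount]
  have : IsEmpty {f : Fin (m+1) → Fin 0 // Function.Surjective f} :=
    ⟨fun ⟨f, _⟩ => (f 0).elim0⟩
  exact Nat.card_of_isEmpty



section A
variable {m n : ℕ}

lemma parts_eq_image_part (Q : Finpartition (Finset.univ : Finset (Fin m))) :
    Q.parts = Finset.univ.image Q.part := by
  ext t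
  simp only [mem_image, mem_univ, true_and]
  constructor
  · intro ht
    obtain ⟨x, hx⟩ := Q.nonempty_of_mem_parts ht
    exact ⟨x, Q.part_eq_of_mem ht hx⟩
  · rintro ⟨x, rfl⟩
    exact Q.part_mem.2 (mem_univ x)

/-- The fiber partition of a surjection. -/
def fiberPartition (f : Fin m → Fin n) (hf : Function.Surjective f) :
    Finpartition (Finset.univ : Finset (Fin m)) where
  parts := Finset.univ.image fun y => Finset.univ.filter fun x => f x = y
  supIndep := by
    rw [supIndep_iff_pairwiseDisjoint]
    rintro t ht u hu htu
    simp only [coe_image, Set.mem_image] at ht hu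
    obtain ⟨y, -, rfl⟩ := ht
    obtain ⟨z, -, rfl⟩ := hu
    have hyz : y ≠ z := fun h => htu (by rw [h])
    intro x hx1 hx2
    simp only [id, le_eq_subset, subset_iff, mem_filter, mem_univ, true_and] at hx1 hx2
    rintro w hw
    exact absurd ((hx1 hw).symm.trans (hx2 hw)) hyz
  sup_parts := by
    apply le_antisymm (Finset.sup_le fun t _ => le_top)
    intro x _
    rw [Finset.mem_sup]
    exact ⟨Finset.univ.filter fun z => f z = f x,
      mem_image_of_mem _ (mem_univ (f x)), by simp⟩
  bot_notMem := by
    simp only [bot_eq_empty, mem_image, mem_univ, true_and, not_exists]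
    intro y h
    obtain ⟨x, hx⟩ := hf y
    exact absurd h (Finset.ne_empty_of_mem (mem_filter.mpr ⟨mem_univ x, hx⟩))

lemma fiber_injective (f : Fin m → Fin n) (hf : Function.Surjective f) :
    Function.Injective fun y => Finset.univ.filter fun x => f x = y := by
  intro y z h
  dsimp only at h
  obtain ⟨x, hx⟩ := hf y
  have : x ∈ Finset.univ.filter fun x => f x = z := by
    rw [← h]; exact mem_filter.mpr ⟨mem_univ x, hx⟩
  simp only [mem_filter, hx] at this
  exact this.2

lemma fiberPartition_card (f : Fin m → Fin n) (hf : Function.Surjective f) :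
    (fiberPartition f hf).parts.card = n := by
  rw [fiberPartition]
  rw [Finset.card_image_of_injective _ (fiber_injective f hf), Finset.card_univ,
    Fintype.card_fin]

/-- The type of pairs (partition with n parts, labeling of the parts). -/
abbrev PL (m n : ℕ) :=
  Σ P : {P : Finpartition (Finset.univ : Finset (Fin m)) // P.parts.card = n},
    (Fin n ≃ {t // t ∈ P.1.parts})

/-- From a labeled partition, the corresponding surjection. -/
def toSurj : PL m n → {f : Fin m → Fin n // Function.Surjective f} :=
  fun q => ⟨fun x => q.2.symm ⟨q.1.1.part x, q.1.1.part_mem.2 (mem_univ x)⟩, by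
    obtain ⟨⟨P, hP⟩, e⟩ := q
    intro y
    obtain ⟨x, hx⟩ := P.nonempty_of_mem_parts (e y).2
    refine ⟨x, ?_⟩
    have h1 : P.part x = (e y).1 := P.part_eq_of_mem (e y).2 hx
    simp only [h1]
    rw [show (⟨(e y).1, (e y).2⟩ : {t // t ∈ P.parts}) = e y from rfl, Equiv.symm_apply_apply]⟩

lemma toSurj_bijective : Function.Bijective (toSurj : PL m n → _) := by
  constructor
  · rintro ⟨⟨P, hP⟩, e⟩ ⟨⟨P', hP'⟩, e'⟩ h
    set f : Fin m → Fin n := fun x => e.symm ⟨P.part x, P.part_mem.2 (mem_univ x)⟩ with hfdef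
    have hsurj : Function.Surjective f := (toSurj ⟨⟨P, hP⟩, e⟩).2
    have hfun : ∀ x : Fin m, f x
        = e'.symm ⟨P'.part x, P'.part_mem.2 (mem_univ x)⟩ :=
      fun x => congrFun (congrArg Subtype.val h) x
    have key : ∀ x : Fin m, P.part x = Finset.univ.filter fun z => f z = f x := by
      intro x
      ext z
      simp only [mem_filter, mem_univ, true_and]
      rw [P.mem_part_iff_part_eq_part (mem_univ z) (mem_univ x)]
      constructor
      · intro hz
        exact congrArg e.symm (Subtype.ext hz)
      · intro hz
        exact congrArg Subtype.val (e.symm.injective hz)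
    have key' : ∀ x : Fin m, P'.part x = Finset.univ.filter fun z => f z = f x := by
      intro x
      ext z
      simp only [mem_filter, mem_univ, true_and]
      rw [P'.mem_part_iff_part_eq_part (mem_univ z) (mem_univ x)]
      constructor
      · intro hz
        rw [hfun z, hfun x]
        exact congrArg e'.symm (Subtype.ext hz)
      · intro hz
        rw [hfun z, hfun x] at hz
        exact congrArg Subtype.val (e'.symm.injective hz)
    have hPP' : P = P' := by
      apply Finpartition.ext
      rw [parts_eq_image_part P, parts_eq_image_part P']
      apply Finset.image_congr
      intro x _
      rw [key x, key' x]
    subst hPP'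
    have hE : e = e' := by
      apply Equiv.ext
      intro y
      obtain ⟨x, rfl⟩ := hsurj y
      have h1 : e (f x) = ⟨P.part x, P.part_mem.2 (mem_univ x)⟩ :=
        Equiv.apply_symm_apply e _
      have h2 : e' (f x) = ⟨P.part x, P.part_mem.2 (mem_univ x)⟩ := by
        rw [hfun x]; exact Equiv.apply_symm_apply e' _
      rw [h1, h2]
    exact Sigma.ext rfl (heq_of_eq hE)
  · rintro ⟨f, hf⟩
    have hmem : ∀ y : Fin n,
        (Finset.univ.filter fun x => f x = y) ∈ (fiberPartition f hf).parts :=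
      fun y => mem_image_of_mem _ (mem_univ y)
    have hbij : Function.Bijective
        (fun y => (⟨Finset.univ.filter fun x => f x = y, hmem y⟩ :
          {t // t ∈ (fiberPartition f hf).parts})) := by
      constructor
      · intro y z hyz
        exact fiber_injective f hf (Subtype.ext_iff.mp hyz)
      · rintro ⟨t, ht⟩
        simp only [fiberPartition, mem_image, mem_univ, true_and] at ht
        obtain ⟨y, rfl⟩ := ht
        exact ⟨y, rfl⟩
    refine ⟨⟨⟨fiberPartition f hf, fiberPartition_card f hf⟩, Equiv.ofBijective _ hbij⟩, ?_⟩
    apply Subtype.ext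
    funext x
    show (Equiv.ofBijective _ hbij).symm ⟨(fiberPartition f hf).part x, _⟩ = f x
    rw [Equiv.symm_apply_eq]
    apply Subtype.ext
    show (fiberPartition f hf).part x = Finset.univ.filter fun z => f z = f x
    exact (fiberPartition f hf).part_eq_of_mem (hmem (f x))
      (mem_filter.mpr ⟨mem_univ x, rfl⟩)

lemma surjCount_eq_stirling2_mul (m n : ℕ) : surjCount m n = stirling2 m n * n ! := by
  have h1 : surjCount m n = Nat.card (PL m n) :=
    (Nat.card_eq_of_bijective _ toSurj_bijective).symm
  rw [h1, Nat.card_eq_fintype_card, Fintype.card_sigma]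
  have h2 : ∀ P : {P : Finpartition (Finset.univ : Finset (Fin m)) // P.parts.card = n},
      Fintype.card (Fin n ≃ {t // t ∈ P.1.parts}) = n ! := by
    intro P
    rw [Fintype.card_equiv (Fintype.equivOfCardEq (by
      rw [Fintype.card_fin, Fintype.card_coe, P.2])), Fintype.card_fin]
  simp only [h2]
  rw [Finset.sum_const, Finset.card_univ, smul_eq_mul, stirling2, Nat.card_eq_fintype_card]
end A



section C
variable {m n : ℕ}

/-- surjCount only depends on the cardinality of the domain type. -/
lemma card_surj_congr {α : Type} [Fintype α] [DecidableEq α] (e : α ≃ Fin m) :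
    Nat.card {g : α → Fin n // Function.Surjective g} = surjCount m n := by
  apply Nat.card_congr
  refine Equiv.subtypeEquiv (Equiv.arrowCongr e (Equiv.refl (Fin n))) fun g => ?_
  show Function.Surjective g ↔ Function.Surjective (Equiv.refl (Fin n) ∘ g ∘ e.symm)
  rw [Equiv.coe_refl, Function.id_comp]
  exact (Equiv.surjective_comp e.symm g).symm

/-- `U m n`: functions `Fin m → Fin (n+1)` hitting every non-last value. -/
abbrev UU (m n : ℕ) := {f : Fin m → Fin (n + 1) // ∀ y : Fin n, ∃ x, f x = y.castSucc}

lemma card_UU_left : Nat.card (UU m n) = surjCount m (n + 1) + surjCount m n := by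
  classical
  have e1 : UU m n ≃ {u : UU m n // ∃ x, u.1 x = Fin.last n} ⊕
      {u : UU m n // ¬∃ x, u.1 x = Fin.last n} :=
    (Equiv.sumCompl _).symm
  rw [Nat.card_congr e1, Nat.card_sum]
  congr 1
  · rw [surjCount]
    apply Nat.card_congr
    refine (Equiv.subtypeSubtypeEquivSubtypeInter
        (fun f : Fin m → Fin (n + 1) => ∀ y : Fin n, ∃ x, f x = y.castSucc)
        (fun f => ∃ x, f x = Fin.last n)).trans
      (Equiv.subtypeEquivRight fun f => ?_)
    constructor
    · rintro ⟨h1, h2⟩ y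
      refine Fin.lastCases ?_ ?_ y
      · exact h2
      · exact h1
    · intro hf
      exact ⟨fun y => hf y.castSucc, hf (Fin.last n)⟩
  · rw [surjCount]
    apply Nat.card_congr
    refine (Equiv.subtypeSubtypeEquivSubtypeInter
        (fun f : Fin m → Fin (n + 1) => ∀ y : Fin n, ∃ x, f x = y.castSucc)
        (fun f => ¬∃ x, f x = Fin.last n)).trans ?_
    refine ⟨fun q => ⟨fun x => (q.1 x).castPred fun he => q.2.2 ⟨x, he⟩, ?_⟩,
      fun q => ⟨fun x => (q.1 x).castSucc, ⟨fun y => (q.2 y).imp fun x hx => by dsimp only; rw [hx], ?_⟩⟩,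
      ?_, ?_⟩
    · intro y
      obtain ⟨x, hx⟩ := q.2.1 y
      exact ⟨x, by simp [hx, Fin.castPred_castSucc]⟩
    · rintro ⟨x, hx⟩
      exact absurd hx (Fin.castSucc_lt_last _).ne
    · rintro ⟨f, h1, h2⟩
      apply Subtype.ext
      funext x
      exact Fin.castSucc_castPred (f x) fun he => h2 ⟨x, he⟩
    · rintro ⟨g, hg⟩
      apply Subtype.ext
      funext x
      exact Fin.castPred_castSucc ((Fin.castSucc_lt_last (g x)).ne)

lemma restrict_heq_elim {m n : ℕ} {s s' : Finset (Fin m)} (h : s = s')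
    (g : {x // x ∈ s} → Fin n) (hg : Function.Surjective g)
    (g' : {x // x ∈ s'} → Fin n) (hg' : Function.Surjective g')
    (H : HEq (⟨g, hg⟩ : {g : {x // x ∈ s} → Fin n // Function.Surjective g})
      (⟨g', hg'⟩ : {g : {x // x ∈ s'} → Fin n // Function.Surjective g}))
    (x : Fin m) (hx : x ∈ s) (hx' : x ∈ s') : g ⟨x, hx⟩ = g' ⟨x, hx'⟩ := by
  subst h
  rw [heq_iff_eq, Subtype.mk.injEq] at H
  exact congrFun H ⟨x, hx⟩

/-- helper for sigma equality of labeled restrictions -/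
lemma heq_restrict {s s' : Finset (Fin m)} (h : s = s')
    (g : {x // x ∈ s} → Fin n) (hg : Function.Surjective g)
    (g' : {x // x ∈ s'} → Fin n) (hg' : Function.Surjective g')
    (hgg : ∀ x (hx : x ∈ s) (hx' : x ∈ s'), g ⟨x, hx⟩ = g' ⟨x, hx'⟩) :
    HEq (⟨g, hg⟩ : {g : {x // x ∈ s} → Fin n // Function.Surjective g})
      (⟨g', hg'⟩ : {g : {x // x ∈ s'} → Fin n // Function.Surjective g}) := by
  subst h
  exact heq_of_eq (Subtype.ext (funext fun x => hgg x.1 x.2 x.2))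

abbrev VV (m n : ℕ) :=
  Σ s : Finset (Fin m), {g : {x // x ∈ s} → Fin n // Function.Surjective g}

def toVV : UU m n → VV m n := fun q =>
  ⟨Finset.univ.filter fun x => q.1 x ≠ Fin.last n,
    fun x => (q.1 x.1).castPred (mem_filter.mp x.2).2, by
      intro y
      obtain ⟨x, hx⟩ := q.2 y
      have hxs : x ∈ Finset.univ.filter fun x => q.1 x ≠ Fin.last n :=
        mem_filter.mpr ⟨mem_univ x, by rw [hx]; exact (Fin.castSucc_lt_last _).ne⟩
      exact ⟨⟨x, hxs⟩, by simp [hx, Fin.castPred_castSucc]⟩⟩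

lemma toVV_bijective : Function.Bijective (toVV : UU m n → VV m n) := by
  constructor
  · rintro ⟨f, hf⟩ ⟨f', hf'⟩ h
    obtain ⟨hs, hg⟩ := Sigma.mk.inj_iff.mp h
    have hmem : ∀ x, f x ≠ Fin.last n ↔ f' x ≠ Fin.last n := by
      intro x
      have := Finset.ext_iff.mp hs x
      simpa using this
    apply Subtype.ext
    funext x
    show f x = f' x
    by_cases hx : f x = Fin.last n
    · rw [hx]
      exact (not_not.mp ((not_iff_not.mpr (hmem x)).mp (not_not.mpr hx))).symm
    · have hx' : f' x ≠ Fin.last n := (hmem x).mp hx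
      have hxs : x ∈ Finset.univ.filter fun z => (⟨f, hf⟩ : UU m n).1 z ≠ Fin.last n :=
        mem_filter.mpr ⟨mem_univ x, hx⟩
      have hxs' : x ∈ Finset.univ.filter fun z => (⟨f', hf'⟩ : UU m n).1 z ≠ Fin.last n :=
        mem_filter.mpr ⟨mem_univ x, hx'⟩
      have := restrict_heq_elim hs _ (toVV ⟨f, hf⟩).2.2 _ (toVV ⟨f', hf'⟩).2.2 hg x hxs hxs'
      have h2 : (f x).castPred hx = (f' x).castPred hx' := this
      rw [← Fin.castSucc_castPred (f x) hx, ← Fin.castSucc_castPred (f' x) hx', h2]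
  · rintro ⟨s, g, hg⟩
    classical
    refine ⟨⟨fun x => if h : x ∈ s then (g ⟨x, h⟩).castSucc else Fin.last n, ?_⟩, ?_⟩
    · intro y
      obtain ⟨⟨x, hx⟩, hgx⟩ := hg y
      exact ⟨x, by dsimp only; rw [dif_pos hx, hgx]⟩
    · have hset : (Finset.univ.filter fun x =>
          (if h : x ∈ s then (g ⟨x, h⟩).castSucc else Fin.last n) ≠ Fin.last n) = s := by
        ext x
        simp only [mem_filter, mem_univ, true_and]
        by_cases hx : x ∈ s
        · simp [hx, (Fin.castSucc_lt_last _).ne]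
        · simp [hx]
      refine Sigma.ext hset ?_
      apply heq_restrict hset
      intro x hx hx'
      simp only [dif_pos hx', Fin.castPred_castSucc]

lemma card_UU_right :
    Nat.card (UU m n) = ∑ j ∈ range (m + 1), m.choose j * surjCount j n := by
  classical
  rw [Nat.card_eq_of_bijective _ toVV_bijective, Nat.card_eq_fintype_card,
    Fintype.card_sigma]
  have h1 : ∀ s : Finset (Fin m),
      Fintype.card {g : {x // x ∈ s} → Fin n // Function.Surjective g}
        = surjCount s.card n := by
    intro s
    rw [← Nat.card_eq_fintype_card]
    exact card_surj_congr s.equivFin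
  simp only [h1]
  rw [← Finset.powerset_univ, Finset.sum_powerset]
  rw [Finset.card_univ, Fintype.card_fin]
  apply Finset.sum_congr rfl
  intro j hj
  rw [Finset.sum_congr rfl (fun s hs => by
    rw [(Finset.mem_powersetCard.mp hs).2]), Finset.sum_const, smul_eq_mul,
    Finset.card_powersetCard, Finset.card_univ, Fintype.card_fin]

end C
lemma surjCount_rec (m n : ℕ) :
    surjCount m (n + 1) + surjCount m n
      = ∑ j ∈ range (m + 1), m.choose j * surjCount j n := by
  rw [← card_UU_left, card_UU_right]




theorem key (n : ℕ) :
    (PowerSeries.exp ℚ - 1) ^ n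
      = PowerSeries.mk fun m => (surjCount m n : ℚ) / (m ! : ℚ) := by
  induction n with
  | zero =>
    ext m
    rw [pow_zero, PowerSeries.coeff_mk, PowerSeries.coeff_one]
    cases m with
    | zero => simp [surjCount_zero_zero]
    | succ m => simp [surjCount_succ_zero]
  | succ n ih =>
    rw [pow_succ, ih]
    ext m
    rw [PowerSeries.coeff_mk, PowerSeries.coeff_mul,
      Finset.Nat.sum_antidiagonal_eq_sum_range_succ_mk]
    have hcoeff : ∀ k : ℕ, (PowerSeries.coeff k) (PowerSeries.exp ℚ - 1)
        = 1 / (k ! : ℚ) - if k = 0 then 1 else 0 := by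
      intro k
      rw [map_sub, PowerSeries.coeff_exp, PowerSeries.coeff_one, Algebra.algebraMap_self_apply]
    simp only [PowerSeries.coeff_mk, hcoeff, mul_sub]
    rw [Finset.sum_sub_distrib]
    have h2 : ∑ j ∈ range (m + 1),
        (surjCount j n : ℚ) / (j ! : ℚ) * (if m - j = 0 then (1:ℚ) else 0)
          = (surjCount m n : ℚ) / (m ! : ℚ) := by
      rw [Finset.sum_eq_single m]
      · simp
      · intro j hj hjm
        have hj' := mem_range.mp hj
        rw [if_neg (by omega), mul_zero]
      · intro h
        exact absurd (self_mem_range_succ m) h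
    have h3 : ∑ j ∈ range (m + 1),
        (surjCount j n : ℚ) / (j ! : ℚ) * (1 / ((m - j)! : ℚ))
          = (∑ j ∈ range (m + 1), (m.choose j * surjCount j n : ℕ)) / (m ! : ℚ) := by
      push_cast
      rw [Finset.sum_div]
      apply Finset.sum_congr rfl
      intro j hj
      have hjm : j ≤ m := by have := mem_range.mp hj; omega
      have hj2 := Nat.choose_mul_factorial_mul_factorial hjm
      have : (m.choose j : ℚ) * j ! * (m - j)! = m ! := by exact_mod_cast hj2
      field_simp
      rw [← this]
      ring
    rw [h2, h3, ← surjCount_rec m n]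
    push_cast
    ring

/-- `(e^X − 1)^n = n! · ∑_{m ≥ 0} (S(m, n)/m!) X^m` as formal power series over `ℚ`. -/
theorem stirling2_egf (n : ℕ) :
    (PowerSeries.exp ℚ - 1) ^ n =
      (n ! : ℚ) • PowerSeries.mk (fun m => (stirling2 m n : ℚ) / (m ! : ℚ)) := by
  rw [key n]
  ext m
  rw [PowerSeries.coeff_mk, map_smul, PowerSeries.coeff_mk, smul_eq_mul,
    surjCount_eq_stirling2_mul]
  push_cast
  ring
end

section
/- For all natural numbers n and m, and every real r > 0, the Stirling number of the second kind admits the contour-integral representation S(n+m, n) = ((n+m)!/n!) · (1/(2πi)) ∮_{|z|=r} (e^z − 1)^n · z^{−(n+m+1)} dz, where the integral is over the circle of radius r centered at 0, traversed counterclockwise, and e^z is the complex exponential. -/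
open Nat

section Aux
open Finset Complex
set_option maxHeartbeats 1000000

lemma expc_hasFPowerSeries (c : ℂ) :
    HasFPowerSeriesOnBall (fun z => Complex.exp (c * z))
      (fun k => ContinuousMultilinearMap.mkPiRing ℂ (Fin k) (c ^ k / k !)) 0 ⊤ := by
  constructor
  · refine le_of_eq (FormalMultilinearSeries.radius_eq_top_of_summable_norm _ ?_).symm
    intro s
    apply Summable.congr (Real.summable_pow_div_factorial (‖c‖ * s))
    intro k
    rw [ContinuousMultilinearMap.norm_mkPiRing]
    rw [norm_div, norm_pow, Complex.norm_natCast, mul_pow]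
    ring
  · simp
  · intro w _
    have h := NormedSpace.expSeries_div_hasSum_exp (c * w)
    rw [← Complex.exp_eq_exp_ℂ] at h
    simp only [zero_add]
    convert h using 2 with k
    · rfl
    simp [ContinuousMultilinearMap.mkPiRing_apply, mul_pow, smul_eq_mul]
    ring

lemma circleIntegral_exp_mul (c : ℂ) (N : ℕ) {r : ℝ} (hr : 0 < r) :
    (∮ z in C(0, r), Complex.exp (c * z) * z ^ (-((N : ℤ) + 1))) =
      (2 * (Real.pi : ℂ) * Complex.I) * c ^ N / (N ! : ℂ) := by
  set f : ℂ → ℂ := fun z => Complex.exp (c * z) with hf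
  have hd : Differentiable ℂ f := by
    exact Complex.differentiable_exp.comp (differentiable_id.const_mul c)
  have hR : ((⟨r, hr.le⟩ : NNReal) : ℝ) = r := rfl
  have h1 := (hd.differentiableOn
      (s := Metric.closedBall 0 ((⟨r, hr.le⟩ : NNReal) : ℝ))).hasFPowerSeriesOnBall
      (R := ⟨r, hr.le⟩) (by exact_mod_cast hr)
  have h1' : HasFPowerSeriesAt f (cauchyPowerSeries f 0 r) 0 := h1.hasFPowerSeriesAt
  have h2 := expc_hasFPowerSeries c
  have heq := h1'.eq_formalMultilinearSeries h2.hasFPowerSeriesAt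
  have hN := congrFun heq N
  have := congrArg (fun (p : ContinuousMultilinearMap ℂ (fun _ : Fin N => ℂ) ℂ) => p (fun _ => 1)) hN
  simp only [cauchyPowerSeries_apply, ContinuousMultilinearMap.mkPiRing_apply] at this
  have hint : (∮ z in C(0, r), (1 / (z - 0)) ^ N • (z - 0)⁻¹ • f z)
      = ∮ z in C(0, r), Complex.exp (c * z) * z ^ (-((N : ℤ) + 1)) := by
    congr 1
    funext z
    have hz : (z:ℂ) ^ (-((N:ℤ) + 1)) = (z⁻¹) ^ N * z⁻¹ := by
      rw [show (-((N:ℤ)+1)) = -(((N+1):ℕ):ℤ) by push_cast; ring, zpow_neg, zpow_natCast,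
        ← inv_pow, pow_succ]
    rw [hz]
    simp only [smul_eq_mul, sub_zero, one_div, hf]
    ring
  have h2pi : (2 * (Real.pi : ℂ) * Complex.I) ≠ 0 := by
    simp [Real.pi_ne_zero, Complex.I_ne_zero, Complex.ofReal_ne_zero]
  rw [hint, inv_smul_eq_iff₀ h2pi] at this
  rw [this]
  simp only [smul_eq_mul, Finset.prod_const_one, one_mul]
  ring

lemma card_surjections (N n : ℕ) :
    (((Finset.univ.filter (fun f : Fin N → Fin n => Function.Surjective f)).card : ℤ))
      = ∑ j ∈ range (n + 1), (-1) ^ (j + n) * (n.choose j : ℤ) * (j : ℤ) ^ N := by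
  classical
  set S : Fin n → Finset (Fin N → Fin n) :=
    fun i => Finset.univ.filter (fun f => ∀ x, f x ≠ i) with hS
  have h0 : (Finset.univ : Finset (Fin n)).inf (fun i => (S i)ᶜ)
      = Finset.univ.filter (fun f : Fin N → Fin n => Function.Surjective f) := by
    ext f
    simp only [Finset.mem_inf, Finset.mem_compl, hS, Finset.mem_filter, Finset.mem_univ, true_and,
      Function.Surjective]
    push_neg
    show _ ↔ f ∈ Finset.univ.filter (fun f : Fin N → Fin n => Function.Surjective f)
    simp only [Finset.mem_filter, Finset.mem_univ, true_and]
    constructor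
    · intro h b
      obtain ⟨x, hx⟩ := h b trivial
      exact ⟨x, hx⟩
    · intro h i _
      obtain ⟨x, hx⟩ := h i
      exact ⟨x, hx⟩
  have h1 : ∀ t : Finset (Fin n), (t.inf S).card = (n - t.card) ^ N := by
    intro t
    have : t.inf S = Fintype.piFinset (fun _ : Fin N => tᶜ) := by
      ext f
      simp only [Finset.mem_inf, hS, Finset.mem_filter, Finset.mem_univ, true_and,
        Fintype.mem_piFinset, Finset.mem_compl]
      constructor
      · intro h x hx
        exact h _ hx x rfl
      · intro h i hi x hfx
        exact h x (hfx ▸ hi)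
    rw [this, Fintype.card_piFinset]
    simp [Finset.card_compl]
  have h2 := Finset.inclusion_exclusion_card_inf_compl (Finset.univ : Finset (Fin n)) S
  rw [h0] at h2
  rw [h2, Finset.sum_powerset]
  simp only [Finset.card_univ, Fintype.card_fin]
  have h3 : ∀ j ∈ range (n + 1),
      (∑ t ∈ powersetCard j (Finset.univ : Finset (Fin n)), ((-1 : ℤ)) ^ t.card * (t.inf S).card)
        = (n.choose j : ℤ) * ((-1) ^ j * ((n - j : ℕ) : ℤ) ^ N) := by
    intro j hj
    rw [Finset.sum_congr rfl (fun t ht => ?_), Finset.sum_const, Finset.card_powersetCard,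
      Finset.card_univ, Fintype.card_fin, nsmul_eq_mul]
    have htc : t.card = j := (Finset.mem_powersetCard.1 ht).2
    rw [h1 t, htc]
    push_cast
    ring
  rw [Finset.sum_congr rfl h3]
  rw [← Finset.sum_range_reflect]
  apply Finset.sum_congr rfl
  intro j hj
  rw [Finset.mem_range] at hj
  have hjn : j ≤ n := by omega
  have e1 : n + 1 - 1 - j = n - j := by omega
  rw [e1, Nat.choose_symm hjn]
  have e2 : n - (n - j) = j := by omega
  rw [e2]
  have e3 : ((-1 : ℤ)) ^ (n - j) = (-1) ^ (j + n) := by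
    have h4 : j + n = (n - j) + 2 * j := by omega
    rw [h4, pow_add, pow_mul]
    norm_num
  rw [e3]
  ring


namespace StirlingAux

variable {N n : ℕ}

/-- The fiber of `f` over `i`, as a finset. -/
def fiber (f : Fin N → Fin n) (i : Fin n) : Finset (Fin N) :=
  univ.filter (fun x => f x = i)

lemma mem_fiber {f : Fin N → Fin n} {i : Fin n} {x : Fin N} :
    x ∈ fiber f i ↔ f x = i := by simp [fiber]

/-- The partition of `Fin N` into fibers of a surjective map `f`. -/
def fiberPartition (f : Fin N → Fin n) (hf : Function.Surjective f) :
    Finpartition (univ : Finset (Fin N)) where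
  parts := univ.image (fiber f)
  supIndep := by
    rw [Finset.supIndep_iff_pairwiseDisjoint]
    rintro t ht u hu hne
    simp only [coe_image, coe_univ, Set.image_univ, Set.mem_range] at ht hu
    obtain ⟨i, rfl⟩ := ht
    obtain ⟨j, rfl⟩ := hu
    refine Finset.disjoint_left.2 fun x hx hx' => hne ?_
    rw [id_eq] at *
    rw [mem_fiber] at hx hx'
    rw [← hx, hx']
  sup_parts := by
    ext x
    simp only [mem_univ, iff_true, Finset.mem_sup]
    exact ⟨fiber f (f x), Finset.mem_image_of_mem _ (mem_univ (f x)), mem_fiber.2 rfl⟩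
  bot_notMem := by
    simp only [bot_eq_empty, Finset.mem_image, mem_univ, true_and, not_exists]
    intro i h
    obtain ⟨x, hx⟩ := hf i
    have : x ∈ fiber f i := mem_fiber.2 hx
    rw [h] at this
    exact absurd this (Finset.notMem_empty x)

lemma fiber_injective {f : Fin N → Fin n} (hf : Function.Surjective f) :
    Function.Injective (fiber f) := by
  intro i j h
  obtain ⟨x, hx⟩ := hf i
  have h1 : x ∈ fiber f i := mem_fiber.2 hx
  rw [h] at h1
  rw [← hx, mem_fiber.1 h1]

lemma fiberPartition_parts_card {f : Fin N → Fin n} (hf : Function.Surjective f) :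
    (fiberPartition f hf).parts.card = n := by
  rw [fiberPartition]
  simp only
  rw [Finset.card_image_of_injOn ((fiber_injective hf).injOn)]
  simp

lemma mem_parts_iff {f : Fin N → Fin n} (hf : Function.Surjective f) {t : Finset (Fin N)} :
    t ∈ (fiberPartition f hf).parts ↔ ∃ i, t = fiber f i := by
  simp only [fiberPartition, Finset.mem_image, mem_univ, true_and]
  exact ⟨fun ⟨i, h⟩ => ⟨i, h.symm⟩, fun ⟨i, h⟩ => ⟨i, h.symm⟩⟩

lemma fiberPartition_part_eq {f : Fin N → Fin n} (hf : Function.Surjective f) (x : Fin N) :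
    (fiberPartition f hf).part x = fiber f (f x) :=
  (fiberPartition f hf).part_eq_of_mem ((mem_parts_iff hf).2 ⟨f x, rfl⟩) (mem_fiber.2 rfl)

section FixedP

variable (P : Finpartition (univ : Finset (Fin N))) (hP : P.parts.card = n)

/-- Labelling map: a part goes to the value of `f` on it. -/
def label (f : Fin N → Fin n) : {t // t ∈ P.parts} → Fin n :=
  fun t => f (t.1.min' (P.nonempty_of_mem_parts t.2))


variable {P}

lemma part_rep {f : Fin N → Fin n} {hf : Function.Surjective f}
    (hfP : fiberPartition f hf = P) {t : Finset (Fin N)} (ht : t ∈ P.parts)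
    (h : t.Nonempty) : t = fiber f (f (t.min' h)) := by
  rw [← hfP] at ht
  obtain ⟨i, rfl⟩ := (mem_parts_iff hf).1 ht
  have : f ((fiber f i).min' h) = i := mem_fiber.1 (Finset.min'_mem _ h)
  rw [this]

lemma label_injective {f : Fin N → Fin n} {hf : Function.Surjective f}
    (hfP : fiberPartition f hf = P) : Function.Injective (label P f) := by
  intro t u h
  apply Subtype.ext
  rw [part_rep hfP t.2 (P.nonempty_of_mem_parts t.2),
    part_rep hfP u.2 (P.nonempty_of_mem_parts u.2)]
  unfold label at h
  rw [h]

/-- The labelling as an equivalence, for `f` whose fiber partition is `P`. -/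
noncomputable def labelEquiv (hP : P.parts.card = n) {f : Fin N → Fin n}
    {hf : Function.Surjective f} (hfP : fiberPartition f hf = P) :
    {t // t ∈ P.parts} ≃ Fin n :=
  Equiv.ofBijective (label P f) <| (Fintype.bijective_iff_injective_and_card _).2
    ⟨label_injective hfP, by rw [Fintype.card_coe, hP, Fintype.card_fin]⟩

variable (P)

/-- From a labelling of the parts, the corresponding function. -/
def unlabel (e : {t // t ∈ P.parts} ≃ Fin n) : Fin N → Fin n :=
  fun x => e ⟨P.part x, P.part_mem.2 (mem_univ x)⟩

lemma unlabel_surjective (e : {t // t ∈ P.parts} ≃ Fin n) :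
    Function.Surjective (unlabel P e) := by
  intro i
  obtain ⟨x, hx⟩ := P.nonempty_of_mem_parts (e.symm i).2
  refine ⟨x, ?_⟩
  have h1 : P.part x = (e.symm i).1 := P.part_eq_of_mem (e.symm i).2 hx
  show e ⟨P.part x, _⟩ = i
  have : (⟨P.part x, P.part_mem.2 (mem_univ x)⟩ : {t // t ∈ P.parts}) = e.symm i :=
    Subtype.ext h1
  rw [this, Equiv.apply_symm_apply]

lemma fiber_unlabel (e : {t // t ∈ P.parts} ≃ Fin n) (i : Fin n) :
    fiber (unlabel P e) i = (e.symm i).1 := by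
  ext x
  rw [mem_fiber]
  constructor
  · intro h
    have : (⟨P.part x, P.part_mem.2 (mem_univ x)⟩ : {t // t ∈ P.parts}) = e.symm i := by
      rw [← h]
      exact (Equiv.symm_apply_apply e _).symm
    have h2 : P.part x = (e.symm i).1 := congrArg Subtype.val this
    rw [← h2]
    exact P.mem_part (mem_univ x)
  · intro hx
    have h1 : P.part x = (e.symm i).1 := P.part_eq_of_mem (e.symm i).2 hx
    show e ⟨P.part x, _⟩ = i
    rw [show (⟨P.part x, P.part_mem.2 (mem_univ x)⟩ : {t // t ∈ P.parts}) = e.symm i from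
      Subtype.ext h1, Equiv.apply_symm_apply]

lemma fiberPartition_unlabel (e : {t // t ∈ P.parts} ≃ Fin n) :
    fiberPartition (unlabel P e) (unlabel_surjective P e) = P := by
  apply Finpartition.ext
  ext t
  rw [mem_parts_iff]
  constructor
  · rintro ⟨i, rfl⟩
    rw [fiber_unlabel]
    exact (e.symm i).2
  · intro ht
    exact ⟨e ⟨t, ht⟩, by rw [fiber_unlabel, Equiv.symm_apply_apply]⟩

lemma unlabel_label (hP : P.parts.card = n) {f : Fin N → Fin n}
    {hf : Function.Surjective f} (hfP : fiberPartition f hf = P) :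
    unlabel P (labelEquiv hP hfP) = f := by
  funext x
  show label P f ⟨P.part x, P.part_mem.2 (mem_univ x)⟩ = f x
  unfold label
  have hpart : P.part x = fiber f (f x) := by
    rw [← hfP]
    exact fiberPartition_part_eq hf x
  have key : ∀ y, y ∈ P.part x → f y = f x := by
    intro y hy
    rw [hpart] at hy
    exact mem_fiber.1 hy
  exact key _ (Finset.min'_mem _ _)

/-- The set of surjections whose fiber partition is `P` is equivalent to the set of
labellings of the parts of `P`. -/
noncomputable def fiberEquiv (hP : P.parts.card = n) :
    {a : {f : Fin N → Fin n // Function.Surjective f} // fiberPartition a.1 a.2 = P} ≃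
      ({t // t ∈ P.parts} ≃ Fin n) where
  toFun a := labelEquiv hP a.2
  invFun e := ⟨⟨unlabel P e, unlabel_surjective P e⟩, fiberPartition_unlabel P e⟩
  left_inv a := by
    apply Subtype.ext
    apply Subtype.ext
    exact unlabel_label P hP a.2
  right_inv e := by
    apply Equiv.ext
    intro t
    show label P (unlabel P e) t = e t
    unfold label unlabel
    have h1 : P.part (t.1.min' (P.nonempty_of_mem_parts t.2)) = t.1 :=
      P.part_eq_of_mem t.2 (Finset.min'_mem _ _)
    congr 1
    exact Subtype.ext h1

end FixedP

noncomputable instance fintypeFinpartition :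
    Fintype (Finpartition (univ : Finset (Fin N))) :=
  Fintype.ofInjective (fun P => P.parts) fun _ _ h => Finpartition.ext h

lemma card_surjective_eq (N n : ℕ) :
    Fintype.card {f : Fin N → Fin n // Function.Surjective f}
      = stirling2 N n * n ! := by
  classical
  set Ptype := {P : Finpartition (univ : Finset (Fin N)) // P.parts.card = n} with hPtype
  have hst : stirling2 N n = Fintype.card Ptype := Nat.card_eq_fintype_card
  set Φ : {f : Fin N → Fin n // Function.Surjective f} → Ptype :=
    fun a => ⟨fiberPartition a.1 a.2, fiberPartition_parts_card a.2⟩ with hΦ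
  have e1 := (Equiv.sigmaFiberEquiv Φ).symm
  rw [Fintype.card_congr e1, Fintype.card_sigma]
  have hfib : ∀ P : Ptype, Fintype.card {a // Φ a = P} = n ! := by
    intro P
    have e2 : {a // Φ a = P} ≃ ({t // t ∈ P.1.parts} ≃ Fin n) := by
      refine Equiv.trans (Equiv.subtypeEquivRight fun a => ?_) (fiberEquiv P.1 P.2)
      exact ⟨fun h => congrArg Subtype.val h, fun h => Subtype.ext h⟩
    rw [Fintype.card_congr e2,
      Fintype.card_equiv (Fintype.equivFinOfCardEq (by rw [Fintype.card_coe, P.2])),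
      Fintype.card_coe, P.2]
  rw [Finset.sum_congr rfl (fun P _ => hfib P), Finset.sum_const, smul_eq_mul,
    Finset.card_univ, hst]

end StirlingAux

end Aux

/-- Saddle-point type contour-integral representation:
`S(n+m, n) = ((n+m)!/n!) · (1/(2πi)) ∮_{|z|=r} (e^z − 1)^n z^{−(n+m+1)} dz`
for every radius `r > 0`. -/
theorem stirling2_circleIntegral_exp (n m : ℕ) (r : ℝ) (hr : 0 < r) :
    (stirling2 (n + m) n : ℂ) =
      (((n + m)! : ℂ) / (n ! : ℂ)) * (2 * Real.pi * Complex.I)⁻¹ *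
        ∮ z in C(0, r), (Complex.exp z - 1) ^ n * z ^ (-((n : ℤ) + m + 1)) := by
  classical
  set N := n + m with hN
  -- the combinatorial identity
  have key1 : ((stirling2 N n * n ! : ℕ) : ℤ)
      = ∑ j ∈ Finset.range (n + 1), (-1) ^ (j + n) * (n.choose j : ℤ) * (j : ℤ) ^ N := by
    have h := card_surjections N n
    rw [← Fintype.card_subtype] at h
    rw [StirlingAux.card_surjective_eq N n] at h
    exact_mod_cast h
  have key : ((stirling2 N n : ℂ) * (n ! : ℂ))
      = ∑ j ∈ Finset.range (n + 1), (-1) ^ (j + n) * (n.choose j : ℂ) * (j : ℂ) ^ N := by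
    exact_mod_cast key1
  -- coefficients and summand functions
  set a : ℕ → ℂ := fun j => (-1) ^ (j + n) * (n.choose j : ℂ) with ha
  set F : ℕ → ℂ → ℂ :=
    fun j z => a j * (Complex.exp ((j : ℂ) * z) * z ^ (-((N : ℤ) + 1))) with hF
  have hint : ∀ z : ℂ, (Complex.exp z - 1) ^ n * z ^ (-((n : ℤ) + m + 1))
      = ∑ j ∈ Finset.range (n + 1), F j z := by
    intro z
    have he : -((n : ℤ) + m + 1) = -((N : ℤ) + 1) := by push_cast [hN]; ring
    rw [he, sub_pow, Finset.sum_mul]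
    refine Finset.sum_congr rfl fun j hj => ?_
    rw [hF, ha]
    simp only
    rw [Complex.exp_nat_mul]
    ring
  have hci : ∀ j : ℕ, CircleIntegrable (F j) 0 r := by
    intro j
    apply ContinuousOn.circleIntegrable hr.le
    apply ContinuousOn.mul continuousOn_const
    apply ContinuousOn.mul
    · exact (Complex.continuous_exp.comp (continuous_const.mul continuous_id)).continuousOn
    · refine ContinuousOn.zpow₀ continuousOn_id _ fun z hz => Or.inl ?_
      rintro rfl
      simp at hz
      exact hr.ne' hz.symm
  have hsum : (∮ z in C(0, r), ∑ j ∈ Finset.range (n + 1), F j z)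
      = ∑ j ∈ Finset.range (n + 1), ∮ z in C(0, r), F j z := by
    simp only [circleIntegral, Finset.smul_sum]
    rw [intervalIntegral.integral_finset_sum]
    intro j hj
    exact (circleIntegrable_iff r).1 (hci j)
  have hI : (∮ z in C(0, r), (Complex.exp z - 1) ^ n * z ^ (-((n : ℤ) + m + 1)))
      = ∑ j ∈ Finset.range (n + 1), a j * (2 * (Real.pi : ℂ) * Complex.I * (j : ℂ) ^ N / (N ! : ℂ)) := by
    rw [circleIntegral.integral_congr hr.le fun z _ => hint z, hsum]
    refine Finset.sum_congr rfl fun j hj => ?_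
    rw [hF]
    simp only
    rw [circleIntegral.integral_const_mul, circleIntegral_exp_mul (j : ℂ) N hr]
  rw [hI]
  have hsum2 : ∑ j ∈ Finset.range (n + 1),
      a j * (2 * (Real.pi : ℂ) * Complex.I * (j : ℂ) ^ N / (N ! : ℂ))
      = (2 * (Real.pi : ℂ) * Complex.I / (N ! : ℂ)) *
          ∑ j ∈ Finset.range (n + 1), a j * (j : ℂ) ^ N := by
    rw [Finset.mul_sum]
    refine Finset.sum_congr rfl fun j hj => ?_
    ring
  have hsum3 : ∑ j ∈ Finset.range (n + 1), a j * (j : ℂ) ^ N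
      = (stirling2 N n : ℂ) * (n ! : ℂ) := by
    rw [key]
  rw [hsum2, hsum3]
  have h2pi : (2 * (Real.pi : ℂ) * Complex.I) ≠ 0 := by
    simp [Real.pi_ne_zero, Complex.I_ne_zero, Complex.ofReal_ne_zero]
  have hnf : ((n ! : ℂ)) ≠ 0 := by exact_mod_cast Nat.factorial_ne_zero n
  have hNf : ((N ! : ℂ)) ≠ 0 := by exact_mod_cast Nat.factorial_ne_zero N
  field_simp
end

section
/- Let y be a real number with 0 < y < 1 and let n ≥ 2 be a natural number. Then the n-th derivative at 0 of the function x ↦ ln(e^x − y) equals (−1)^{n−1} · y/(1−y)^n · ∑_{σ} y^{des(σ)}, where the sum is over all permutations σ of the set {1, …, n−1} and des(σ) = #{ i : 1 ≤ i ≤ n−2, σ(i) > σ(i+1) } is the number of descents of σ. (Equivalently, the Taylor coefficient [x^n] ln(e^x − y) equals (−1)^{n−1} y A_{n−1}(y)/(n!(1−y)^n), where A_m(y) = ∑_{σ ∈ S_m} y^{des(σ)} is the Eulerian polynomial, whose coefficients are the Eulerian numbers.) -/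
/-- The number of descents of a permutation `σ` of `Fin m`: the number of
indices `i` with `i + 1 < m` and `σ(i) > σ(i+1)`. -/
def descNum {m : ℕ} (σ : Equiv.Perm (Fin m)) : ℕ :=
  (Finset.univ.filter fun p : Fin m × Fin m =>
    (p.1 : ℕ) + 1 = (p.2 : ℕ) ∧ σ p.2 < σ p.1).card


open Finset

/-- descent count of a ℕ-indexed word of length M -/
def dCount (v : ℕ → ℕ) (M : ℕ) : ℕ :=
  ((Finset.range (M - 1)).filter (fun i => v (i + 1) < v i)).card

def word {m : ℕ} (σ : Equiv.Perm (Fin m)) : ℕ → ℕ :=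
  fun i => if h : i < m then (σ ⟨i, h⟩ : ℕ) else m

lemma word_lt {m : ℕ} (σ : Equiv.Perm (Fin m)) {i : ℕ} (h : i < m) :
    word σ i < m := by
  simp only [word, dif_pos h]
  exact (σ ⟨i, h⟩).isLt

lemma descNum_eq_dCount {m : ℕ} (σ : Equiv.Perm (Fin m)) :
    descNum σ = dCount (word σ) m := by
  unfold descNum dCount
  apply Finset.card_bij (fun p _ => (p.1 : ℕ))
  · rintro ⟨p1, p2⟩ hp
    simp only [mem_filter, mem_univ, true_and] at hp
    obtain ⟨h1, h2⟩ := hp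
    have hp2 : (p2 : ℕ) < m := p2.isLt
    have h1' : (p1 : ℕ) + 1 < m := h1 ▸ hp2
    simp only [mem_filter, mem_range]
    refine ⟨by omega, ?_⟩
    have e1 : word σ (p1 : ℕ) = (σ p1 : ℕ) := by
      simp [word, p1.isLt]
    have e2 : word σ ((p1 : ℕ) + 1) = (σ p2 : ℕ) := by
      simp only [word, dif_pos h1']
      have hq : (⟨(p1 : ℕ) + 1, h1'⟩ : Fin m) = p2 := Fin.ext h1
      rw [hq]
    rw [e1, e2]
    exact h2
  · rintro ⟨p1, p2⟩ hp ⟨q1, q2⟩ hq h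
    simp only [mem_filter, mem_univ, true_and] at hp hq
    have : p1 = q1 := Fin.ext h
    subst this
    have : p2 = q2 := Fin.ext (by omega)
    subst this; rfl
  · intro i hi
    simp only [mem_filter, mem_range] at hi
    obtain ⟨hi1, hi2⟩ := hi
    have h1 : i < m := by omega
    have h2 : i + 1 < m := by omega
    refine ⟨(⟨i, h1⟩, ⟨i + 1, h2⟩), ?_, rfl⟩
    have e1 : word σ i = (σ ⟨i, h1⟩ : ℕ) := by simp [word, h1]
    have e2 : word σ (i + 1) = (σ ⟨i + 1, h2⟩ : ℕ) := by simp [word, h2]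
    rw [e1, e2] at hi2
    exact Finset.mem_filter.mpr ⟨Finset.mem_univ _, rfl, hi2⟩

lemma dCount_congr {v w : ℕ → ℕ} {M : ℕ} (h : ∀ i < M, v i = w i) :
    dCount v M = dCount w M := by
  unfold dCount
  congr 1
  apply Finset.filter_congr
  intro i hi
  simp only [mem_range] at hi
  rw [h i (by omega), h (i + 1) (by omega)]

/-- insert value `B` at position `p` into word `v` -/
def insWord (v : ℕ → ℕ) (p B : ℕ) : ℕ → ℕ :=
  fun i => if i < p then v i else if i = p then B else v (i - 1)
lemma dCount_eq_sum (v : ℕ → ℕ) (M : ℕ) :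
    dCount v M = ∑ i ∈ Finset.range (M - 1), (if v (i + 1) < v i then 1 else 0) :=
  Finset.card_filter _ _

lemma dCount_insWord (v : ℕ → ℕ) (m p B : ℕ) (hp : p ≤ m) (hB : ∀ i < m, v i < B) :
    dCount (insWord v p B) (m + 1) =
      dCount v m + (if p = m then 0 else if 0 < p ∧ v p < v (p - 1) then 0 else 1) := by
  set u := insWord v p B with hu
  have hu1 : ∀ i, i < p → u i = v i := fun i h => by simp [hu, insWord, h]
  have hu2 : u p = B := by simp [hu, insWord]
  have hu3 : ∀ i, p < i → u i = v (i - 1) := fun i h => by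
    show insWord v p B i = v (i - 1)
    simp only [insWord]
    rw [if_neg (by omega), if_neg (by omega)]
  set a : ℕ → ℕ := fun i => if v (i + 1) < v i then 1 else 0 with ha
  set b : ℕ → ℕ := fun i => if u (i + 1) < u i then 1 else 0 with hb
  have hdu : dCount u (m + 1) = ∑ i ∈ Finset.range m, b i := by
    rw [dCount_eq_sum, Nat.add_sub_cancel]
  have hdv : dCount v m = ∑ i ∈ Finset.range (m - 1), a i := dCount_eq_sum v m
  rcases eq_or_lt_of_le hp with hpm | hpm
  · -- p = m
    subst hpm
    simp only [if_pos rfl, Nat.add_zero]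
    rw [hdu, hdv]
    rcases Nat.eq_zero_or_pos p with h0 | h0
    · subst h0; simp
    · obtain ⟨M, rfl⟩ : ∃ M, p = M + 1 := ⟨p - 1, by omega⟩
      rw [Finset.sum_range_succ]
      have hbM : b M = 0 := by
        have e1 : u (M + 1) = B := hu2
        have e2 : u M = v M := hu1 M (by omega)
        simp [hb, e1, e2, Nat.not_lt.mpr (hB M (by omega)).le]
      have : ∀ i ∈ Finset.range M, b i = a i := by
        intro i hi
        simp only [mem_range] at hi
        have e1 : u (i + 1) = v (i + 1) := hu1 _ (by omega)
        have e2 : u i = v i := hu1 _ (by omega)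
        simp [hb, ha, e1, e2]
      rw [Finset.sum_congr rfl this, hbM]
      simp
  · -- p < m
    have hne : ¬ p = m := by omega
    rw [if_neg hne]
    rcases Nat.eq_zero_or_pos p with h0 | h0
    · subst h0
      simp only [Nat.lt_irrefl, false_and, if_neg (by simp : ¬ (0 < 0 ∧ v 0 < v (0-1)))]
      obtain ⟨M, rfl⟩ : ∃ M, m = M + 1 := ⟨m - 1, by omega⟩
      rw [hdu, hdv, Finset.sum_range_succ']
      have hb0 : b 0 = 1 := by
        have e1 : u 1 = v 0 := hu3 1 (by omega)
        have e2 : u 0 = B := hu2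
        simp [hb, e1, e2, hB 0 (by omega)]
      have : ∀ i ∈ Finset.range M, b (i + 1) = a i := by
        intro i hi
        have e1 : u (i + 1 + 1) = v (i + 1) := by rw [hu3 _ (by omega)]; norm_num
        have e2 : u (i + 1) = v i := by rw [hu3 _ (by omega)]; norm_num
        simp [hb, ha, e1, e2]
      rw [Finset.sum_congr rfl this, hb0]
      simp
    · -- 0 < p < m
      -- main claim: ∑_{range m} b + a (p-1) = ∑_{range (m-1)} a + 1
      have key : (∑ i ∈ Finset.range m, b i) + a (p - 1) =
          (∑ i ∈ Finset.range (m - 1), a i) + 1 := by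
        have split1 : (∑ i ∈ Finset.Ico 0 p, b i) + (∑ i ∈ Finset.Ico p m, b i) =
            ∑ i ∈ Finset.range m, b i := by
          rw [Finset.range_eq_Ico]
          exact Finset.sum_Ico_consecutive _ (by omega) (by omega)
        have e1 : (∑ i ∈ Finset.Ico 0 p, b i) =
            (∑ i ∈ Finset.Ico 0 (p - 1), b i) + b (p - 1) := by
          have : p = (p - 1) + 1 := by omega
          rw [this, Finset.sum_Ico_succ_top (by omega)]
          simp
        have ebp1 : b (p - 1) = 0 := by
          have e2 : u ((p - 1) + 1) = B := by rw [(by omega : (p - 1) + 1 = p), hu2]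
          have e3 : u (p - 1) = v (p - 1) := hu1 _ (by omega)
          simp [hb, e2, e3, Nat.not_lt.mpr (hB (p-1) (by omega)).le]
        have e4 : (∑ i ∈ Finset.Ico 0 (p - 1), b i) = ∑ i ∈ Finset.Ico 0 (p - 1), a i := by
          apply Finset.sum_congr rfl
          intro i hi
          simp only [Finset.mem_Ico] at hi
          have g1 : u (i + 1) = v (i + 1) := hu1 _ (by omega)
          have g2 : u i = v i := hu1 _ (by omega)
          simp [hb, ha, g1, g2]
        have e5 : (∑ i ∈ Finset.Ico p m, b i) = b p + ∑ i ∈ Finset.Ico (p + 1) m, b i :=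
          Finset.sum_eq_sum_Ico_succ_bot hpm _
        have ebp : b p = 1 := by
          have g1 : u (p + 1) = v p := by rw [hu3 _ (by omega)]; simp
          simp [hb, g1, hu2, hB p (by omega)]
        have e6 : (∑ i ∈ Finset.Ico (p + 1) m, b i) = ∑ i ∈ Finset.Ico p (m - 1), a i := by
          rw [Finset.sum_Ico_eq_sum_range, Finset.sum_Ico_eq_sum_range]
          have hcard : m - (p + 1) = m - 1 - p := by omega
          rw [hcard]
          apply Finset.sum_congr rfl
          intro i _
          have g1 : u (p + i + 1 + 1) = v (p + i + 1) := by
            rw [hu3 _ (by omega)]; norm_num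
          have g2 : u (p + i + 1) = v (p + i) := by
            rw [hu3 _ (by omega)]; norm_num
          have hidx : p + 1 + i = p + i + 1 := by omega
          simp [hb, ha, hidx, g1, g2]
        have merge : (∑ i ∈ Finset.Ico 0 (p - 1), a i) + a (p - 1) +
            (∑ i ∈ Finset.Ico p (m - 1), a i) = ∑ i ∈ Finset.range (m - 1), a i := by
          have m1 : (∑ i ∈ Finset.Ico 0 (p - 1), a i) + a (p - 1) =
              ∑ i ∈ Finset.Ico 0 p, a i := by
            have : p = (p - 1) + 1 := by omega
            rw [this, Finset.sum_Ico_succ_top (by omega)]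
            simp
          rw [m1, Finset.range_eq_Ico]
          exact Finset.sum_Ico_consecutive _ (by omega) (by omega)
        omega
      have hap : a (p - 1) = (if v p < v (p - 1) then 1 else 0) := by
        have : p - 1 + 1 = p := by omega
        simp [ha, this]
      rw [hdu, hdv]
      rcases lt_or_ge (v p) (v (p - 1)) with hd | hd
      · rw [if_pos ⟨h0, hd⟩]
        rw [if_pos hd] at hap
        omega
      · rw [if_neg (by push_neg; intro _; omega)]
        rw [if_neg (by omega)] at hap
        omega

def ins {m : ℕ} (σ : Equiv.Perm (Fin m)) (p : Fin (m + 1)) : Equiv.Perm (Fin (m + 1)) :=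
  (finSuccEquiv' p).trans ((Equiv.optionCongr σ).trans (finSuccEquiv' (Fin.last m)).symm)

lemma ins_apply_self {m : ℕ} (σ : Equiv.Perm (Fin m)) (p : Fin (m + 1)) :
    ins σ p p = Fin.last m := by
  simp [ins, finSuccEquiv'_at]

lemma ins_apply_succAbove {m : ℕ} (σ : Equiv.Perm (Fin m)) (p : Fin (m + 1)) (j : Fin m) :
    ins σ p (p.succAbove j) = (σ j).castSucc := by
  simp [ins, finSuccEquiv'_succAbove, Fin.succAbove_last]

lemma word_ins {m : ℕ} (σ : Equiv.Perm (Fin m)) (p : Fin (m + 1)) :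
    ∀ i, i < m + 1 → word (ins σ p) i = insWord (word σ) (p : ℕ) m i := by
  intro i hi
  have hL : word (ins σ p) i = ((ins σ p) ⟨i, hi⟩ : ℕ) := by simp [word, hi]
  rcases lt_trichotomy i (p : ℕ) with h | h | h
  · have him : i < m := by have := p.isLt; omega
    have hfin : (⟨i, hi⟩ : Fin (m + 1)) = p.succAbove ⟨i, him⟩ := by
      rw [Fin.succAbove_of_castSucc_lt _ _ (by rw [Fin.lt_def]; simpa using h)]
      rfl
    rw [hL, hfin, ins_apply_succAbove]
    simp [insWord, h, word, him]
  · have hfin : (⟨i, hi⟩ : Fin (m + 1)) = p := by exact Fin.ext h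
    rw [hL, hfin, ins_apply_self]
    simp [insWord, h]
  · have him : i - 1 < m := by omega
    have hfin : (⟨i, hi⟩ : Fin (m + 1)) = p.succAbove ⟨i - 1, him⟩ := by
      rw [Fin.succAbove_of_le_castSucc _ _ (by rw [Fin.le_def]; simpa using (by omega : (p:ℕ) ≤ i - 1))]
      exact Fin.ext (by simp; omega)
    rw [hL, hfin, ins_apply_succAbove]
    simp only [insWord, if_neg (by omega : ¬ i < (p:ℕ)), if_neg (by omega : ¬ i = (p:ℕ))]
    simp [word, him]

lemma descNum_ins {m : ℕ} (σ : Equiv.Perm (Fin m)) (p : Fin (m + 1)) :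
    descNum (ins σ p) = descNum σ +
      (if (p : ℕ) = m then 0
       else if 0 < (p : ℕ) ∧ word σ (p : ℕ) < word σ ((p : ℕ) - 1) then 0 else 1) := by
  rw [descNum_eq_dCount, dCount_congr (word_ins σ p),
    dCount_insWord _ _ _ _ (Nat.lt_succ_iff.mp p.isLt) (fun i hi => word_lt σ hi),
    ← descNum_eq_dCount]

lemma ins_bijective {m : ℕ} :
    Function.Bijective (fun q : Equiv.Perm (Fin m) × Fin (m + 1) => ins q.1 q.2) := by
  rw [Fintype.bijective_iff_injective_and_card]
  constructor
  · rintro ⟨σ, p⟩ ⟨σ', p'⟩ h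
    simp only at h
    have hp : p = p' := by
      have h1 : (ins σ p).symm (Fin.last m) = p := by
        rw [← ins_apply_self σ p, Equiv.symm_apply_apply]
      have h2 : (ins σ' p').symm (Fin.last m) = p' := by
        rw [← ins_apply_self σ' p', Equiv.symm_apply_apply]
      rw [← h1, ← h2, h]
    subst hp
    have hσ : σ = σ' := by
      apply Equiv.ext
      intro j
      have := congrArg (fun e : Equiv.Perm (Fin (m+1)) => e (p.succAbove j)) h
      simp only [ins_apply_succAbove] at this
      exact Fin.castSucc_injective m this
    rw [hσ]
  · simp [Fintype.card_perm, Fintype.card_prod, Nat.factorial_succ, Fintype.card_fin, mul_comm]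

lemma dCount_le (v : ℕ → ℕ) (M : ℕ) : dCount v M ≤ M - 1 := by
  unfold dCount
  calc _ ≤ (Finset.range (M-1)).card := Finset.card_filter_le _ _
  _ = M - 1 := Finset.card_range _

lemma descNum_le {m : ℕ} (σ : Equiv.Perm (Fin m)) : descNum σ ≤ m - 1 := by
  rw [descNum_eq_dCount]; exact dCount_le _ _

/-- number of positions with no new descent is `dCount v m + 1` -/
lemma card_czero (v : ℕ → ℕ) (m : ℕ) :
    ((Finset.range (m + 1)).filter fun p =>
      (if p = m then 0 else if 0 < p ∧ v p < v (p - 1) then 0 else 1) = 0).card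
      = dCount v m + 1 := by
  have hset : ((Finset.range (m + 1)).filter fun p =>
      (if p = m then 0 else if 0 < p ∧ v p < v (p - 1) then 0 else 1) = 0) =
      insert m (((Finset.range (m - 1)).filter fun i => v (i + 1) < v i).image (· + 1)) := by
    ext q
    simp only [Finset.mem_filter, Finset.mem_range, Finset.mem_insert, Finset.mem_image]
    constructor
    · rintro ⟨hq, hc⟩
      by_cases hqm : q = m
      · exact Or.inl hqm
      · right
        rw [if_neg hqm] at hc
        by_cases hd : 0 < q ∧ v q < v (q - 1)
        · have hq1 : q - 1 + 1 = q := by omega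
          refine ⟨q - 1, ⟨by omega, ?_⟩, by omega⟩
          rw [hq1]
          exact hd.2
        · rw [if_neg hd] at hc; omega
    · rintro (rfl | ⟨i, hi, rfl⟩)
      · simp
      · refine ⟨by omega, ?_⟩
        rw [if_neg (by omega), if_pos ⟨by omega, by
          have h1 : i + 1 - 1 = i := by omega
          rw [h1]; exact hi.2⟩]
  have hnm : m ∉ ((Finset.range (m - 1)).filter fun i => v (i + 1) < v i).image (· + 1) := by
    simp only [Finset.mem_image, Finset.mem_filter, Finset.mem_range]
    rintro ⟨i, ⟨hi1, _⟩, he⟩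
    omega
  rw [hset, Finset.card_insert_of_notMem hnm,
    Finset.card_image_of_injective _ (add_left_injective 1)]
  rfl

lemma sum_pow_descNum_ins {m : ℕ} (σ : Equiv.Perm (Fin m)) (t : ℝ) :
    ∑ p : Fin (m + 1), t ^ descNum (ins σ p) =
      ((descNum σ : ℝ) + 1) * t ^ descNum σ +
        ((m : ℝ) - descNum σ) * t ^ (descNum σ + 1) := by
  set v := word σ with hv
  set D := descNum σ with hD
  have hDd : D = dCount v m := descNum_eq_dCount σ
  set c : ℕ → ℕ := fun p => if p = m then 0 else if 0 < p ∧ v p < v (p - 1) then 0 else 1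
    with hc
  have step1 : ∑ p : Fin (m + 1), t ^ descNum (ins σ p) =
      ∑ p ∈ Finset.range (m + 1), t ^ (D + c p) := by
    rw [← Fin.sum_univ_eq_sum_range (fun p => t ^ (D + c p)) (m + 1)]
    exact Finset.sum_congr rfl fun p _ => by rw [descNum_ins]
  rw [step1]
  have hc01 : ∀ p, c p = 0 ∨ c p = 1 := by
    intro p; simp only [hc]; split_ifs <;> simp
  have hcard0 : ((Finset.range (m + 1)).filter fun p => c p = 0).card = D + 1 := by
    rw [hc, hD, descNum_eq_dCount]; exact card_czero v m
  have hcard1 : ((Finset.range (m + 1)).filter fun p => ¬ c p = 0).card = m - D := by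
    have key := Finset.card_filter_add_card_filter_not
      (s := Finset.range (m + 1)) (p := fun p => c p = 0)
    rw [hcard0, Finset.card_range] at key
    have hDm : D ≤ m - 1 := hD ▸ descNum_le σ
    omega
  rw [← Finset.sum_filter_add_sum_filter_not (Finset.range (m + 1)) (fun p => c p = 0)]
  have e0 : ∑ p ∈ (Finset.range (m + 1)).filter (fun p => c p = 0), t ^ (D + c p) =
      (D + 1 : ℝ) * t ^ D := by
    have hcongr : ∀ p ∈ (Finset.range (m + 1)).filter (fun p => c p = 0),
        t ^ (D + c p) = t ^ D := fun p hp => by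
      rw [Finset.mem_filter] at hp; rw [hp.2, Nat.add_zero]
    rw [Finset.sum_congr rfl hcongr, Finset.sum_const, hcard0]
    push_cast; ring
  have e1 : ∑ p ∈ (Finset.range (m + 1)).filter (fun p => ¬ c p = 0), t ^ (D + c p) =
      ((m : ℝ) - D) * t ^ (D + 1) := by
    have hcongr : ∀ p ∈ (Finset.range (m + 1)).filter (fun p => ¬ c p = 0),
        t ^ (D + c p) = t ^ (D + 1) := fun p hp => by
      rw [Finset.mem_filter] at hp
      rcases hc01 p with h | h
      · exact absurd h hp.2
      · rw [h]
    rw [Finset.sum_congr rfl hcongr, Finset.sum_const, hcard1]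
    have hDm : D ≤ m - 1 := hD ▸ descNum_le σ
    have hDm' : D ≤ m := le_trans hDm (Nat.sub_le _ _)
    rw [nsmul_eq_mul, Nat.cast_sub hDm']
  rw [e0, e1]

/-- Eulerian recurrence, summed form -/
lemma perm_sum_recurrence (m : ℕ) (t : ℝ) :
    ∑ τ : Equiv.Perm (Fin (m + 1)), t ^ descNum τ =
      ∑ σ : Equiv.Perm (Fin m),
        (((descNum σ : ℝ) + 1) * t ^ descNum σ +
          ((m : ℝ) - descNum σ) * t ^ (descNum σ + 1)) := by
  rw [← Function.Bijective.sum_comp (ins_bijective (m := m)) (fun τ => t ^ descNum τ)]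
  rw [Fintype.sum_prod_type]
  exact Finset.sum_congr rfl fun σ _ => sum_pow_descNum_ins σ t

noncomputable def Am (m : ℕ) (t : ℝ) : ℝ := ∑ σ : Equiv.Perm (Fin m), t ^ descNum σ

noncomputable def Am' (m : ℕ) (t : ℝ) : ℝ :=
  ∑ σ : Equiv.Perm (Fin m), (descNum σ : ℝ) * t ^ (descNum σ - 1)

lemma hasDerivAt_Am (m : ℕ) (t : ℝ) : HasDerivAt (Am m) (Am' m t) t := by
  unfold Am Am'
  exact HasDerivAt.fun_sum fun σ _ => hasDerivAt_pow _ t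

lemma Am_rec (m : ℕ) (t : ℝ) :
    Am (m + 1) t = (1 + m * t) * Am m t + t * (1 - t) * Am' m t := by
  rw [Am, perm_sum_recurrence, Am, Am', Finset.mul_sum, Finset.mul_sum,
    ← Finset.sum_add_distrib]
  apply Finset.sum_congr rfl
  intro σ _
  set d := descNum σ with hd
  have key : t * ((d : ℝ) * t ^ (d - 1)) = (d : ℝ) * t ^ d := by
    cases d with
    | zero => simp
    | succ k => simp only [Nat.add_sub_cancel]; push_cast; ring
  have h2 : t ^ (d + 1) = t ^ d * t := pow_succ t d
  rw [h2]
  linear_combination (t - 1) * key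

lemma descNum_fin_one (σ : Equiv.Perm (Fin 1)) : descNum σ = 0 := by
  unfold descNum
  rw [Finset.card_eq_zero, Finset.filter_eq_empty_iff]
  rintro p _ ⟨h1, _⟩
  have := p.1.isLt
  have := p.2.isLt
  omega

lemma Am_one (t : ℝ) : Am 1 t = 1 := by
  unfold Am
  rw [Finset.sum_congr rfl fun σ _ => by rw [descNum_fin_one σ, pow_zero]]
  simp

noncomputable def G (y : ℝ) (m : ℕ) (x : ℝ) : ℝ :=
  (-1) ^ m * ((y * Real.exp (-x)) * Am m (y * Real.exp (-x))) /
    (1 - y * Real.exp (-x)) ^ (m + 1)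

lemma hasDerivAt_G (y : ℝ) (hy0 : 0 < y) (m : ℕ) (x : ℝ) (hx : y < Real.exp x) :
    HasDerivAt (G y m) (G y (m + 1) x) x := by
  set t := y * Real.exp (-x) with ht
  have hexp : (0:ℝ) < Real.exp x := Real.exp_pos x
  have ht1 : t < 1 := by
    rw [ht, Real.exp_neg, mul_inv_lt_iff₀ hexp, one_mul]
    exact hx
  have htne : (1 : ℝ) - t ≠ 0 := by linarith
  have hT : HasDerivAt (fun x : ℝ => y * Real.exp (-x)) (-t) x := by
    have h1 : HasDerivAt (fun x : ℝ => -x) (-1) x := (hasDerivAt_id x).neg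
    have h2 := (Real.hasDerivAt_exp (-x)).comp x h1
    have h3 := h2.const_mul y
    have h4 : -t = y * (Real.exp (-x) * -1) := by rw [ht]; ring
    rw [h4]; exact h3
  have hnum : HasDerivAt (fun s : ℝ => (-1 : ℝ) ^ m * (s * Am m s))
      ((-1 : ℝ) ^ m * (Am m t + t * Am' m t)) t := by
    have h := ((hasDerivAt_id t).mul (hasDerivAt_Am m t)).const_mul ((-1 : ℝ) ^ m)
    exact h.congr_deriv (by simp [id])
  have hden : HasDerivAt (fun s : ℝ => (1 - s) ^ (m + 1))
      (((m : ℝ) + 1) * (1 - t) ^ m * (-1)) t := by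
    have h1 : HasDerivAt (fun s : ℝ => 1 - s) (-1) t := (hasDerivAt_id t).const_sub 1
    have h := h1.pow (m + 1)
    exact h.congr_deriv (by push_cast; simp)
  have hu := hnum.div hden (pow_ne_zero (m + 1) htne)
  have hfinal := hu.comp x hT
  have hval : G y (m + 1) x =
      (((-1 : ℝ) ^ m * (Am m t + t * Am' m t) * (1 - t) ^ (m + 1) -
        (-1 : ℝ) ^ m * (t * Am m t) * (((m : ℝ) + 1) * (1 - t) ^ m * (-1))) /
        ((1 - t) ^ (m + 1)) ^ 2) * (-t) := by
    simp only [G]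
    rw [← ht, Am_rec m t]
    field_simp
    ring
  rw [hval]
  exact hfinal

/-- Eulerian-number expression for the derivatives of `x ↦ ln(e^x − y)`:
for `0 < y < 1` and `n ≥ 2`, the `n`-th derivative at `0` equals
`(−1)^{n−1} · y/(1−y)^n · ∑_{σ ∈ S_{n−1}} y^{des(σ)}`. -/
theorem iteratedDeriv_log_exp_sub_eulerian (y : ℝ) (hy0 : 0 < y) (hy1 : y < 1)
    (n : ℕ) (hn : 2 ≤ n) :
    iteratedDeriv n (fun x : ℝ => Real.log (Real.exp x - y)) 0 =
      (-1 : ℝ) ^ (n - 1) * (y / (1 - y) ^ n) *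
        ∑ σ : Equiv.Perm (Fin (n - 1)), y ^ descNum σ := by
  set f : ℝ → ℝ := fun x => Real.log (Real.exp x - y) with hf
  set U : Set ℝ := {x | y < Real.exp x} with hUdef
  have hUopen : IsOpen U := isOpen_lt continuous_const Real.continuous_exp
  have hderiv1 : ∀ x ∈ U, HasDerivAt f ((Real.exp x - y)⁻¹ * Real.exp x) x := by
    intro x hx
    have hpos : 0 < Real.exp x - y := by
      have : y < Real.exp x := hx
      linarith
    have h1 : HasDerivAt (fun x : ℝ => Real.exp x - y) (Real.exp x) x :=
      (Real.hasDerivAt_exp x).sub_const y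
    exact (Real.hasDerivAt_log hpos.ne').comp x h1
  have key : ∀ k : ℕ, ∀ x ∈ U, iteratedDeriv (k + 2) f x = G y (k + 1) x := by
    intro k
    induction k with
    | zero =>
      intro x hx
      have hx' : y < Real.exp x := hx
      have hpos : 0 < Real.exp x - y := by linarith
      rw [iteratedDeriv_succ, iteratedDeriv_one]
      have hev : deriv f =ᶠ[nhds x] fun z => (Real.exp z - y)⁻¹ * Real.exp z := by
        filter_upwards [hUopen.mem_nhds hx] with z hz
        exact (hderiv1 z hz).deriv
      rw [hev.deriv_eq]
      have h1 : HasDerivAt (fun x : ℝ => Real.exp x - y) (Real.exp x) x :=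
        (Real.hasDerivAt_exp x).sub_const y
      have hinv := h1.inv hpos.ne'
      have hg := hinv.mul (Real.hasDerivAt_exp x)
      rw [show (fun z => (Real.exp z - y)⁻¹ * Real.exp z) = ((fun x => Real.exp x - y)⁻¹ * Real.exp) from rfl, hg.deriv]
      simp only [G]
      norm_num [Am_one]
      rw [Real.exp_neg]
      have hne : 1 - y * (Real.exp x)⁻¹ ≠ 0 := by
        have : 1 - y * (Real.exp x)⁻¹ = (Real.exp x - y) / Real.exp x := by
          field_simp
        rw [this]
        exact div_ne_zero hpos.ne' (Real.exp_ne_zero x)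
      field_simp
      ring
    | succ k ih =>
      intro x hx
      rw [iteratedDeriv_succ]
      have hev : iteratedDeriv (k + 2) f =ᶠ[nhds x] G y (k + 1) := by
        filter_upwards [hUopen.mem_nhds hx] with z hz
        exact ih z hz
      rw [hev.deriv_eq]
      exact (hasDerivAt_G y hy0 (k + 1) x hx).deriv
  have h0U : (0 : ℝ) ∈ U := by
    show y < Real.exp 0
    rw [Real.exp_zero]
    exact hy1
  have hmain := key (n - 2) 0 h0U
  rw [(by omega : n - 2 + 2 = n)] at hmain
  rw [hmain, (by omega : n - 2 + 1 = n - 1)]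
  simp only [G, neg_zero, Real.exp_zero, mul_one]
  rw [(by omega : n - 1 + 1 = n)]
  show (-1 : ℝ) ^ (n - 1) * (y * Am (n - 1) y) / (1 - y) ^ n = _
  rw [Am]
  ring
end

section
/- For every real ζ > 0 and every natural number n ≥ 2, the n-th derivative at 0 of the function x ↦ ln(e^{ζ+x} − 1) has sign (−1)^{n−1}; that is, (−1)^{n−1} · (d/dx)^n [ln(e^{ζ+x} − 1)] |_{x=0} > 0. (Consequently, for every ζ > 0 the function x ↦ (1 − e^{−ζ}) ln(e^{ζ+x} − 1) admits a sign-decomposition in which Taylor coefficients of degree ≥ 2 have alternating signs, positive for odd degree and negative for even degree, uniformly in ζ.) -/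
open Polynomial Real Filter Set Topology

private lemma eval_nonneg_of_coeff_nonneg (Q : Polynomial ℝ) (hQ : ∀ k, 0 ≤ Q.coeff k)
    {u : ℝ} (hu : 0 ≤ u) : 0 ≤ Q.eval u := by
  rw [Polynomial.eval_eq_sum_range]
  exact Finset.sum_nonneg fun i _ => mul_nonneg (hQ i) (pow_nonneg hu i)

private lemma aux_main (m : ℕ) :
    ∃ Q : Polynomial ℝ, (∀ k, 0 ≤ Q.coeff k) ∧ (∀ k, m < k → Q.coeff k = 0) ∧
      (∀ u : ℝ, 0 < u → u < 1 → 0 < Q.eval u) ∧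
      ∀ y : ℝ, 0 < y →
        iteratedDeriv m (deriv (fun t : ℝ => Real.log (Real.exp t - 1))) y =
          (-1 : ℝ) ^ m * Q.eval (Real.exp (-y)) / (1 - Real.exp (-y)) ^ (m + 1) := by
  induction m with
  | zero =>
    refine ⟨1, ?_, ?_, by simp, ?_⟩
    · intro k; by_cases h : k = 0 <;> simp [Polynomial.coeff_one, h]
    · intro k hk; rw [Polynomial.coeff_one, if_neg (by omega)]
    · intro y hy
      have h1 : (1 : ℝ) < Real.exp y := by
        rw [show (1:ℝ) = Real.exp 0 by simp]; exact Real.exp_lt_exp.2 hy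
      have hne : Real.exp y - 1 ≠ 0 := by linarith
      have hd : HasDerivAt (fun t : ℝ => Real.log (Real.exp t - 1))
          (Real.exp y / (Real.exp y - 1)) y :=
        ((Real.hasDerivAt_exp y).sub_const 1).log hne
      rw [iteratedDeriv_zero, hd.deriv]
      rw [Real.exp_neg]
      have he : Real.exp y ≠ 0 := (Real.exp_pos y).ne'
      field_simp
      simp only [Polynomial.eval_one, zero_add, pow_one, mul_one]
      field_simp
  | succ m IH =>
    obtain ⟨Q, hQnn, hQvan, hQpos, hQeq⟩ := IH
    set Q₁ : Polynomial ℝ :=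
      X * ((1 - X) * derivative Q + C ((m : ℝ) + 1) * Q) with hQ₁def
    have hinner : ∀ k, ((1 - X) * derivative Q + C ((m : ℝ) + 1) * Q).coeff k =
        (derivative Q).coeff k - (X * derivative Q).coeff k + ((m : ℝ) + 1) * Q.coeff k := by
      intro k; simp only [sub_mul, one_mul, Polynomial.coeff_add, Polynomial.coeff_sub,
        Polynomial.coeff_C_mul]
    have hQ₁nn : ∀ k, 0 ≤ Q₁.coeff k := by
      intro k
      match k with
      | 0 => simp [hQ₁def, Polynomial.mul_coeff_zero]
      | (j+1) =>
        rw [hQ₁def, Polynomial.coeff_X_mul, hinner]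
        match j with
        | 0 =>
          simp only [Polynomial.coeff_derivative, Polynomial.mul_coeff_zero,
            Polynomial.coeff_X_zero, zero_mul, sub_zero]
          have := hQnn 1; have := hQnn 0; push_cast; nlinarith
        | (i+1) =>
          rw [Polynomial.coeff_X_mul]
          simp only [Polynomial.coeff_derivative]
          rcases le_or_gt (i + 1) m with h | h
          · have h1 := hQnn (i+2); have h2 := hQnn (i+1)
            have : (i : ℝ) + 1 ≤ (m : ℝ) := by exact_mod_cast h
            push_cast; nlinarith
          · have h3 : Q.coeff (i + 1) = 0 := hQvan _ h
            have h1 := hQnn (i+2)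
            rw [h3]; push_cast; nlinarith
    have hQ₁van : ∀ k, m + 1 < k → Q₁.coeff k = 0 := by
      intro k hk
      match k, hk with
      | (j+1), hk =>
        rw [hQ₁def, Polynomial.coeff_X_mul, hinner]
        have hj : m < j := by omega
        match j, hj with
        | (i+1), hj =>
          rw [Polynomial.coeff_X_mul]
          simp only [Polynomial.coeff_derivative]
          rw [hQvan (i+2) (by omega), hQvan (i+1) (by omega)]
          ring
    have hQ'nn : ∀ k, 0 ≤ (derivative Q).coeff k := by
      intro k
      rw [Polynomial.coeff_derivative]
      have := hQnn (k+1); positivity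
    have hQ₁pos : ∀ u : ℝ, 0 < u → u < 1 → 0 < Q₁.eval u := by
      intro u hu0 hu1
      rw [hQ₁def]
      simp only [Polynomial.eval_mul, Polynomial.eval_add, Polynomial.eval_sub,
        Polynomial.eval_X, Polynomial.eval_one, Polynomial.eval_C]
      have h1 : 0 ≤ (1 - u) * (derivative Q).eval u :=
        mul_nonneg (by linarith) (eval_nonneg_of_coeff_nonneg _ hQ'nn hu0.le)
      have h2 : 0 < ((m : ℝ) + 1) * Q.eval u :=
        mul_pos (by positivity) (hQpos u hu0 hu1)
      exact mul_pos hu0 (by linarith)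
    refine ⟨Q₁, hQ₁nn, hQ₁van, hQ₁pos, ?_⟩
    intro y hy
    have hmem : Set.Ioi (0:ℝ) ∈ 𝓝 y := isOpen_Ioi.mem_nhds hy
    have hEq : iteratedDeriv m (deriv (fun t : ℝ => Real.log (Real.exp t - 1))) =ᶠ[𝓝 y]
        fun t => (-1 : ℝ) ^ m * Q.eval (Real.exp (-t)) / (1 - Real.exp (-t)) ^ (m + 1) :=
      Filter.eventuallyEq_of_mem hmem fun t ht => hQeq t ht
    rw [iteratedDeriv_succ, hEq.deriv_eq]
    set u := Real.exp (-y) with hu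
    have hu0 : 0 < u := Real.exp_pos _
    have hu1 : u < 1 := by
      rw [hu, show (1:ℝ) = Real.exp 0 by simp]; exact Real.exp_lt_exp.2 (by linarith)
    have hune : 1 - u ≠ 0 := by linarith
    have hexp : HasDerivAt (fun t : ℝ => Real.exp (-t)) (-u) y := by
      have hneg : HasDerivAt (fun t : ℝ => -t) (-1) y := (hasDerivAt_id y).neg
      simpa [hu, Function.comp_def] using (Real.hasDerivAt_exp (-y)).comp y hneg
    have hN : HasDerivAt (fun t : ℝ => (-1:ℝ)^m * Q.eval (Real.exp (-t)))
        ((-1:ℝ)^m * ((derivative Q).eval u * (-u))) y :=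
      (((Q.hasDerivAt u).comp y hexp)).const_mul _
    have hDbase : HasDerivAt (fun t : ℝ => 1 - Real.exp (-t)) u y := by
      simpa [Pi.sub_def] using (hasDerivAt_const y (1:ℝ)).sub hexp
    have hD : HasDerivAt (fun t : ℝ => (1 - Real.exp (-t)) ^ (m+1))
        ((m+1) * (1 - u) ^ m * u) y := by
      simpa [Pi.pow_def, hu] using hDbase.pow (m+1)
    have hDne : (1 - u) ^ (m+1) ≠ 0 := pow_ne_zero _ hune
    have hF := hN.div hD hDne
    rw [show (fun t : ℝ => (-1:ℝ)^m * Q.eval (Real.exp (-t)) / (1 - Real.exp (-t)) ^ (m + 1)) = ((fun t : ℝ => (-1:ℝ)^m * Q.eval (Real.exp (-t))) / fun t : ℝ => (1 - Real.exp (-t)) ^ (m + 1)) from rfl, hF.deriv]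
    rw [← hu]
    rw [hQ₁def]
    simp only [Polynomial.eval_mul, Polynomial.eval_add, Polynomial.eval_sub,
      Polynomial.eval_X, Polynomial.eval_one, Polynomial.eval_C]
    rw [div_eq_div_iff (pow_ne_zero _ hDne) (pow_ne_zero _ hune)]
    ring

/-- Sign of the Taylor coefficients of the saddle-point action summand: for
every `ζ > 0` and `n ≥ 2`, the `n`-th derivative at `0` of
`x ↦ ln(e^{ζ+x} − 1)` has sign `(−1)^{n−1}`. -/
theorem sign_iteratedDeriv_log_exp_sub_one (ζ : ℝ) (hζ : 0 < ζ) (n : ℕ)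
    (hn : 2 ≤ n) :
    0 < (-1 : ℝ) ^ (n - 1) *
      iteratedDeriv n (fun x : ℝ => Real.log (Real.exp (ζ + x) - 1)) 0 := by
  obtain ⟨m, rfl⟩ : ∃ m, n = m + 2 := ⟨n - 2, by omega⟩
  have hshift : iteratedDeriv (m+2) (fun x : ℝ => Real.log (Real.exp (ζ + x) - 1)) 0 =
      iteratedDeriv (m+2) (fun t : ℝ => Real.log (Real.exp t - 1)) ζ := by
    have := iteratedDeriv_comp_const_add (m+2) (fun t : ℝ => Real.log (Real.exp t - 1)) ζ
    have h0 := congrFun this 0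
    simpa using h0
  rw [hshift, iteratedDeriv_succ']
  obtain ⟨Q, hQnn, hQvan, hQpos, hQeq⟩ := aux_main (m+1)
  rw [hQeq ζ hζ]
  set u := Real.exp (-ζ) with hu
  have hu0 : 0 < u := Real.exp_pos _
  have hu1 : u < 1 := by
    rw [hu, show (1:ℝ) = Real.exp 0 by simp]; exact Real.exp_lt_exp.2 (by linarith)
  have hQe : 0 < Q.eval u := hQpos u hu0 hu1
  have hden : 0 < (1 - u) ^ (m + 1 + 1) := pow_pos (by linarith) _
  have hsq : ((-1:ℝ) ^ (m + 2 - 1)) * ((-1:ℝ) ^ (m+1)) = 1 := by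
    rw [show m + 2 - 1 = m + 1 from rfl, ← pow_add]
    exact Even.neg_one_pow ⟨m+1, by ring⟩
  calc (0:ℝ) < Q.eval u / (1 - u) ^ (m + 1 + 1) := div_pos hQe hden
    _ = (-1 : ℝ) ^ (m + 2 - 1) *
        ((-1 : ℝ) ^ (m+1) * Q.eval u / (1 - u) ^ (m + 1 + 1)) := by
      rw [mul_div_assoc, ← mul_assoc, hsq, one_mul]
end

section
/- For every real a > 0 and every natural number k with k < a², one has ∫_a^{∞} x^k e^{−x²/2} dx ≤ a^{k−1} e^{−a²/2} · (1 − k/a²)^{−1}. -/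
open MeasureTheory Real Set Filter

/-- Gaussian tail bound: for `a > 0` and `k < a²`,
`∫_a^∞ x^k e^{−x²/2} dx ≤ a^{k−1} e^{−a²/2} (1 − k/a²)^{−1}`. -/
theorem gaussian_tail_bound (a : ℝ) (ha : 0 < a) (k : ℕ) (hk : (k : ℝ) < a ^ 2) :
    (∫ x in Set.Ici a, x ^ k * Real.exp (-x ^ 2 / 2)) ≤
      a ^ ((k : ℤ) - 1) * Real.exp (-a ^ 2 / 2) * (1 - (k : ℝ) / a ^ 2)⁻¹ := by
  set c : ℝ := 1 - (k : ℝ) / a ^ 2 with hc_def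
  have ha2 : (0:ℝ) < a ^ 2 := by positivity
  have hc : 0 < c := by
    rw [hc_def, sub_pos, div_lt_one ha2]; exact hk
  set G : ℝ → ℝ := fun x => -(x ^ ((k : ℤ) - 1) * Real.exp (-x ^ 2 / 2)) / c with hG_def
  set G' : ℝ → ℝ := fun x =>
    (x ^ (k : ℤ) - ((k : ℝ) - 1) * x ^ ((k : ℤ) - 2)) * Real.exp (-x ^ 2 / 2) / c with hG'_def
  -- derivative
  have hderiv : ∀ x ∈ Set.Ioi a, HasDerivAt G (G' x) x := by
    intro x hx
    have hx0 : (0:ℝ) < x := ha.trans hx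
    have h1 : HasDerivAt (fun x : ℝ => x ^ ((k : ℤ) - 1))
        (((k : ℝ) - 1) * x ^ ((k : ℤ) - 1 - 1)) x := by
      have := hasDerivAt_zpow ((k : ℤ) - 1) x (Or.inl hx0.ne')
      refine this.congr_deriv ?_
      push_cast; ring
    have h2 : HasDerivAt (fun x : ℝ => Real.exp (-x ^ 2 / 2))
        (Real.exp (-x ^ 2 / 2) * (-x)) x := by
      have hp : HasDerivAt (fun x : ℝ => -x ^ 2 / 2) (-x) x := by
        have := (hasDerivAt_pow 2 x).neg.div_const 2
        refine this.congr_deriv ?_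
        push_cast; ring
      exact (Real.hasDerivAt_exp _).comp x hp
    have h3 := ((h1.mul h2).neg).div_const c
    refine HasDerivAt.congr_deriv h3 (Eq.symm ?_)
    have hxx : x ^ ((k : ℤ) - 1) * x = x ^ (k : ℤ) := by
      rw [← zpow_add_one₀ hx0.ne', sub_add_cancel]
    have hxx2 : (k:ℤ) - 1 - 1 = (k:ℤ) - 2 := by ring
    rw [hG'_def]
    simp only [hxx2]
    have hxx' : x ^ ((k : ℤ) - 1) * x = x ^ k := by rw [hxx, zpow_natCast]
    field_simp
    linear_combination (-1 : ℝ) * hxx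
  -- nonnegativity of the derivative
  have key : ∀ x ∈ Set.Ioi a, 0 ≤ x ^ (k : ℤ) - ((k : ℝ) - 1) * x ^ ((k : ℤ) - 2) := by
    intro x hx
    have hx0 : (0:ℝ) < x := ha.trans hx
    have hxk2 : (0:ℝ) < x ^ ((k : ℤ) - 2) := zpow_pos hx0 _
    have hsq : a ^ 2 ≤ x ^ 2 := by nlinarith [le_of_lt (Set.mem_Ioi.mp hx)]
    have hxk : x ^ (k : ℤ) = x ^ ((k : ℤ) - 2) * x ^ 2 := by
      rw [← zpow_natCast x 2, ← zpow_add₀ hx0.ne']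
      norm_num
    rw [hxk]
    nlinarith [hk]
  have hpos : ∀ x ∈ Set.Ioi a, 0 ≤ G' x := by
    intro x hx
    exact div_nonneg (mul_nonneg (key x hx) (Real.exp_pos _).le) hc.le
  -- limit at infinity
  have htends : Tendsto G atTop (nhds 0) := by
    have h0 : Tendsto (fun x : ℝ => Real.exp (-(1/2 : ℝ) * x)) atTop (nhds 0) := by
      have h : Tendsto (fun x : ℝ => (1/2 : ℝ) * x) atTop atTop :=
        tendsto_id.const_mul_atTop (by norm_num)
      have h2 := Real.tendsto_exp_neg_atTop_nhds_zero.comp h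
      refine h2.congr fun x => ?_
      simp only [Function.comp_apply]
      rw [neg_mul]
    have hlo := (rpow_mul_exp_neg_mul_sq_isLittleO_exp_neg (by norm_num : (0:ℝ) < 1/2)
      ((k : ℝ) - 1)).tendsto_zero_of_tendsto h0
    have heq : ∀ᶠ x in atTop, (fun x : ℝ => x ^ ((k:ℝ) - 1) * Real.exp (-(1/2) * x ^ 2)) x
        = (fun x : ℝ => x ^ ((k : ℤ) - 1) * Real.exp (-x ^ 2 / 2)) x := by
      filter_upwards [eventually_gt_atTop (0:ℝ)] with x hx0
      have : x ^ ((k:ℝ) - 1) = x ^ ((k : ℤ) - 1) := by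
        rw [show ((k:ℝ) - 1) = (((k:ℤ) - 1 : ℤ) : ℝ) by push_cast; ring,
          Real.rpow_intCast]
      rw [this]
      ring_nf
    have := (hlo.congr' heq).neg.div_const c
    simpa using this
  -- continuity at a
  have hcont : ContinuousWithinAt G (Set.Ici a) a := by
    have : ContinuousAt G a := by
      have h1 : ContinuousAt (fun x : ℝ => x ^ ((k : ℤ) - 1)) a :=
        continuousAt_zpow₀ a _ (Or.inl ha.ne')
      have h2 : ContinuousAt (fun x : ℝ => Real.exp (-x ^ 2 / 2)) a := by fun_prop
      exact ((h1.mul h2).neg).div_const c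
    exact this.continuousWithinAt
  have hint : ∫ x in Set.Ioi a, G' x = 0 - G a :=
    integral_Ioi_of_hasDerivAt_of_nonneg hcont hderiv hpos htends
  have hintegrable : IntegrableOn G' (Set.Ioi a) :=
    integrableOn_Ioi_deriv_of_nonneg hcont hderiv hpos htends
  -- pointwise bound of the integrand by G'
  have hbound : ∀ x ∈ Set.Ioi a, x ^ k * Real.exp (-x ^ 2 / 2) ≤ G' x := by
    intro x hx
    have hx0 : (0:ℝ) < x := ha.trans hx
    have hxk2 : (0:ℝ) < x ^ ((k : ℤ) - 2) := zpow_pos hx0 _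
    have hsq : a ^ 2 ≤ x ^ 2 := by nlinarith [le_of_lt (Set.mem_Ioi.mp hx)]
    have hxk : x ^ (k : ℤ) = x ^ ((k : ℤ) - 2) * x ^ 2 := by
      rw [← zpow_natCast x 2, ← zpow_add₀ hx0.ne']
      norm_num
    have hxknat : (x : ℝ) ^ k = x ^ (k : ℤ) := (zpow_natCast x k).symm
    -- need : c * x^k ≤ x^k - (k-1) x^(k-2)
    have hmain : c * x ^ (k : ℤ) ≤ x ^ (k : ℤ) - ((k : ℝ) - 1) * x ^ ((k : ℤ) - 2) := by
      have h1 : ((k : ℝ) - 1) * x ^ ((k : ℤ) - 2) ≤ (k : ℝ) * x ^ ((k : ℤ) - 2) := by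
        nlinarith
      have h2 : (k : ℝ) * x ^ ((k : ℤ) - 2) * a ^ 2 ≤ (k : ℝ) * x ^ (k : ℤ) := by
        rw [hxk]
        have : (0:ℝ) ≤ (k : ℝ) * x ^ ((k : ℤ) - 2) := by positivity
        nlinarith
      have hck : c * x ^ (k : ℤ) = x ^ (k : ℤ) - (k : ℝ) * x ^ (k : ℤ) / a ^ 2 := by
        rw [hc_def]; field_simp
      rw [hck]
      have h3 : (k : ℝ) * x ^ ((k : ℤ) - 2) ≤ (k : ℝ) * x ^ (k : ℤ) / a ^ 2 := by
        rw [le_div_iff₀ ha2]; exact h2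
      linarith
    rw [hG'_def, hxknat, le_div_iff₀ hc]
    have hm := mul_le_mul_of_nonneg_right hmain (Real.exp_pos (-x ^ 2 / 2)).le
    linarith [hm]
  have hmono : (∫ x in Set.Ioi a, x ^ k * Real.exp (-x ^ 2 / 2)) ≤ ∫ x in Set.Ioi a, G' x := by
    apply integral_mono_of_nonneg
    · filter_upwards [ae_restrict_mem measurableSet_Ioi] with x hx
      have hx0 : (0:ℝ) < x := ha.trans hx
      positivity
    · exact hintegrable
    · filter_upwards [ae_restrict_mem measurableSet_Ioi] with x hx
      exact hbound x hx
  rw [MeasureTheory.integral_Ici_eq_integral_Ioi]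
  refine hmono.trans ?_
  rw [hint, hG_def]
  simp only []
  rw [div_eq_mul_inv]
  ring_nf
  rfl
end
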